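/- arXiv:2103.01253 — 4 statements merged into one kernel-verified Lean document; each statement's English description precedes it below -/
import Mathlib

section
/- Let A be a P-algebra over a field k. Then A contains no nonzero finite-dimensional A-submodule: every left A-submodule of A (under left multiplication) that is finite-dimensional as a k-vector space is zero. -/
/-- A connected ℕ-graded algebra `A` over a field `k` (with grading `𝒜`) is a P-algebra with
respect to an increasing chain of graded subalgebras `F n` exhausting `A` and a strictly
increasing dimension function `pd` if each `F n` is a finite-dimensional Poincaré duality
algebra of dimension `pd n` (its grading being induced from that of `A`). -/
structure IsPAlgebra (k : Type*) [Field k] {A : Type*} [Ring A] [Algebra k A]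
    (𝒜 : ℕ → Submodule k A) [GradedAlgebra 𝒜]
    (F : ℕ → Subalgebra k A) (pd : ℕ → ℕ) : Prop where
  connected : 𝒜 0 = (1 : Submodule k A)
  chain : ∀ n, F n ≤ F (n + 1)
  exhaustive : ∀ a : A, ∃ n, a ∈ F n
  graded_subalgebra : ∀ n, (F n).toSubmodule = ⨆ i, 𝒜 i ⊓ (F n).toSubmodule
  finiteDimensional : ∀ n, FiniteDimensional k (F n)
  pd_lt : ∀ n, pd n < pd (n + 1)
  eq_bot_of_gt : ∀ n, ∀ j, pd n < j → 𝒜 j ⊓ (F n).toSubmodule = ⊥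
  top_rank : ∀ n, Module.finrank k ↥(𝒜 (pd n) ⊓ (F n).toSubmodule) = 1
  duality : ∀ n, ∀ j, j ≤ pd n → ∀ x ∈ 𝒜 j ⊓ (F n).toSubmodule, x ≠ 0 →
    ∃ z ∈ 𝒜 (pd n - j) ⊓ (F n).toSubmodule, z * x ≠ 0

section Aux

variable {k A : Type*} [Field k] [Ring A] [Algebra k A]
    (𝒜 : ℕ → Submodule k A) [GradedAlgebra 𝒜]

/-- Homogeneous components of elements of a graded submodule lie in the submodule. -/
lemma PAlg.decompose_mem_of_mem_iSup (p : Submodule k A) {x : A}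
    (hx : x ∈ ⨆ i, 𝒜 i ⊓ p) (d : ℕ) :
    (DirectSum.decompose 𝒜 x d : A) ∈ p := by
  refine Submodule.iSup_induction (motive := fun y => (DirectSum.decompose 𝒜 y d : A) ∈ p)
    (fun i => 𝒜 i ⊓ p) hx ?_ ?_ ?_
  · rintro i y ⟨hy1, hy2⟩
    rcases eq_or_ne i d with h | h
    · rwa [DirectSum.decompose_of_mem_same 𝒜 (h ▸ hy1)]
    · rw [DirectSum.decompose_of_mem_ne 𝒜 hy1 h]
      exact p.zero_mem
  · simp
  · intro y z hy hz
    rw [DirectSum.decompose_add]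
    simpa using p.add_mem hy hz

/-- Multiplying by a homogeneous element of degree `e` shifts homogeneous components. -/
lemma PAlg.decompose_mul_apply {e j d : ℕ} (hd : e + j = d) {z : A} (hz : z ∈ 𝒜 e) (x : A) :
    (DirectSum.decompose 𝒜 (z * x) d : A) = z * (DirectSum.decompose 𝒜 x j : A) := by
  induction x using DirectSum.Decomposition.inductionOn 𝒜 with
  | zero => simp
  | @homogeneous i m =>
    have hzm : z * (m : A) ∈ 𝒜 (e + i) := SetLike.mul_mem_graded hz m.2
    rcases eq_or_ne i j with h | h
    · subst h
      rw [DirectSum.decompose_of_mem_same 𝒜 (hd ▸ hzm),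
        DirectSum.decompose_of_mem_same 𝒜 m.2]
    · have hne : e + i ≠ d := by omega
      rw [DirectSum.decompose_of_mem_ne 𝒜 hzm hne,
        DirectSum.decompose_of_mem_ne 𝒜 m.2 h, mul_zero]
  | add y y' hy hy' =>
    simp only [mul_add, DirectSum.decompose_add, DirectSum.add_apply, Submodule.coe_add, hy, hy']

/-- Elements of a finitely generated `k`-submodule have homogeneous components
bounded in degree. -/
lemma PAlg.exists_bound (N : Submodule k A) (hfg : N.FG) :
    ∃ D : ℕ, ∀ x ∈ N, ∀ d, D < d → (DirectSum.decompose 𝒜 x d : A) = 0 := by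
  classical
  obtain ⟨s, hs⟩ := hfg
  refine ⟨s.sup (fun a => (DirectSum.decompose 𝒜 a).support.sup id), ?_⟩
  intro x hx d hd
  set P : Submodule k A :=
    { carrier := {y | (DirectSum.decompose 𝒜 y d : A) = 0}
      add_mem' := by
        intro a b ha hb
        simp only [Set.mem_setOf_eq, DirectSum.decompose_add, DirectSum.add_apply] at *
        push_cast
        rw [ha, hb, add_zero]
      zero_mem' := by simp
      smul_mem' := by
        intro c a ha
        simp only [Set.mem_setOf_eq, DirectSum.decompose_smul, DirectSum.smul_apply,
          SetLike.val_smul] at *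
        rw [ha, smul_zero] } with hP
  have hsub : (s : Set A) ⊆ (P : Set A) := by
    intro a ha
    show (DirectSum.decompose 𝒜 a d : A) = 0
    by_contra h
    have hmem : d ∈ (DirectSum.decompose 𝒜 a).support := by
      rw [DFinsupp.mem_support_iff]
      exact fun h0 => h (by rw [h0]; rfl)
    have h1 : d ≤ (DirectSum.decompose 𝒜 a).support.sup id :=
      Finset.le_sup (f := id) hmem
    have h2 : (DirectSum.decompose 𝒜 a).support.sup id ≤
        s.sup (fun a => (DirectSum.decompose 𝒜 a).support.sup id) :=
      Finset.le_sup (f := fun a => (DirectSum.decompose 𝒜 a).support.sup id) ha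
    omega
  have : N ≤ P := hs ▸ Submodule.span_le.mpr hsub
  exact this hx

end Aux

set_option synthInstance.maxHeartbeats 1000000 in
/-- A P-algebra `A` over a field `k` contains no nonzero finite-dimensional left
`A`-submodule: every left `A`-submodule of `A` (i.e. left ideal, `A` acting by left
multiplication) which is finite-dimensional as a `k`-vector space is zero. -/
theorem statement2 {k A : Type*} [Field k] [Ring A] [Algebra k A]
    (𝒜 : ℕ → Submodule k A) [GradedAlgebra 𝒜]
    (F : ℕ → Subalgebra k A) (pd : ℕ → ℕ)
    (hPA : IsPAlgebra k 𝒜 F pd)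
    (N : Submodule A A) (hfin : FiniteDimensional k (N.restrictScalars k)) :
    N = ⊥ := by
  by_contra hN
  obtain ⟨x, hxN, hx0⟩ := Submodule.exists_mem_ne_zero_of_ne_bot hN
  have hfg : (N.restrictScalars k).FG :=
    (Submodule.fg_top _).mp (Module.finite_def.mp hfin)
  obtain ⟨D, hD⟩ := PAlg.exists_bound 𝒜 (N.restrictScalars k) hfg
  obtain ⟨n, hn⟩ := hPA.exhaustive x
  have hmono : Monotone F := monotone_nat_of_le_succ hPA.chain
  have hpdmono : StrictMono pd := strictMono_nat_of_lt_succ hPA.pd_lt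
  set m := max n (D + 1) with hm
  have hxm : x ∈ F m := hmono (le_max_left _ _) hn
  have hDpd : D < pd m := by
    have h1 : D + 1 ≤ m := le_max_right _ _
    have h2 : m ≤ pd m := hpdmono.le_apply
    omega
  -- x has some nonzero homogeneous component
  have hex : ∃ j, (DirectSum.decompose 𝒜 x j : A) ≠ 0 := by
    by_contra h
    push_neg at h
    apply hx0
    have hdec : DirectSum.decompose 𝒜 x = 0 :=
      DFinsupp.ext fun i => Subtype.ext (by simpa using h i)
    have := (DirectSum.decompose 𝒜).injective
      (hdec.trans (DirectSum.decompose_zero (ℳ := 𝒜)).symm)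
    exact this
  obtain ⟨j, hxj0⟩ := hex
  -- the component lies in the graded subalgebra F m
  have hxm' : x ∈ ⨆ i, 𝒜 i ⊓ (F m).toSubmodule := by
    rw [← hPA.graded_subalgebra m]; exact hxm
  have hxjF : (DirectSum.decompose 𝒜 x j : A) ∈ (F m).toSubmodule :=
    PAlg.decompose_mem_of_mem_iSup 𝒜 _ hxm' j
  have hxj𝒜 : (DirectSum.decompose 𝒜 x j : A) ∈ 𝒜 j := SetLike.coe_mem _
  have hxjmem : (DirectSum.decompose 𝒜 x j : A) ∈ 𝒜 j ⊓ (F m).toSubmodule := ⟨hxj𝒜, hxjF⟩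
  have hjle : j ≤ pd m := by
    by_contra h
    push_neg at h
    have := hPA.eq_bot_of_gt m j h
    rw [this] at hxjmem
    exact hxj0 (by simpa using hxjmem)
  obtain ⟨z, hzmem, hzx⟩ := hPA.duality m j hjle _ hxjmem hxj0
  -- z * x lies in N and has a nonzero component in degree pd m > D
  have hzxN : z * x ∈ N := by
    have := N.smul_mem z hxN
    rwa [smul_eq_mul] at this
  have hcomp : (DirectSum.decompose 𝒜 (z * x) (pd m) : A)
      = z * (DirectSum.decompose 𝒜 x j : A) :=
    PAlg.decompose_mul_apply 𝒜 (Nat.sub_add_cancel hjle) hzmem.1 x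
  have hzero : (DirectSum.decompose 𝒜 (z * x) (pd m) : A) = 0 :=
    hD (z * x) hzxN (pd m) hDpd
  rw [hcomp] at hzero
  exact hzx hzero
end

section
/- Let k be a field, let B be a Poincaré duality algebra of dimension d over k, and let M be a finitely generated graded B-module. Then there exists an injective homomorphism of graded B-modules from M into a finitely generated free graded B-module. -/
/-- A finite-dimensional ℕ-graded algebra `B` over a field `k` with grading `ℬ` is a
Poincaré duality algebra of dimension `d` if it is connected (`B^0 = k`), vanishes above
degree `d`, has one-dimensional top component `B^d`, and satisfies Poincaré duality. -/
structure IsPoincareDualityAlgebra (k : Type*) [Field k] {B : Type*} [Ring B] [Algebra k B]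
    (ℬ : ℕ → Submodule k B) [GradedAlgebra ℬ] (d : ℕ) : Prop where
  finiteDimensional : FiniteDimensional k B
  connected : ℬ 0 = (1 : Submodule k B)
  eq_bot_of_gt : ∀ j, d < j → ℬ j = ⊥
  top_rank : Module.finrank k (ℬ d) = 1
  duality : ∀ j, j ≤ d → ∀ x ∈ ℬ j, x ≠ 0 → ∃ z ∈ ℬ (d - j), z * x ≠ 0

set_option maxHeartbeats 3200000 in
/-- Let `B` be a Poincaré duality algebra of dimension `d` over a field `k` and let `M` be a
finitely generated (ℤ-)graded `B`-module.  Then `M` embeds, by an injective homomorphism of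
graded `B`-modules, into a finitely generated free graded `B`-module, i.e. a finite direct
sum `⊕ᵢ B⟨deg i⟩` of degree shifts of `B`; the map being graded means that a homogeneous
element of `M` of degree `j` is sent, in the `i`-th shifted copy of `B`, into the component
of `B` of degree `j - deg i` (which is zero when `j - deg i < 0`). -/
theorem statement7 {k B : Type*} [Field k] [Ring B] [Algebra k B]
    (ℬ : ℕ → Submodule k B) [GradedAlgebra ℬ] (d : ℕ)
    (hPD : IsPoincareDualityAlgebra k ℬ d)
    {M : Type*} [AddCommGroup M] [Module B M] [Module k M] [IsScalarTower k B M]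
    (ℳ : ℤ → Submodule k M) [DirectSum.Decomposition ℳ]
    (hMgr : ∀ (i : ℕ) (j : ℤ), ∀ a ∈ ℬ i, ∀ m ∈ ℳ j, a • m ∈ ℳ ((i : ℤ) + j))
    [Module.Finite B M] :
    ∃ (m : ℕ) (deg : Fin m → ℤ) (φ : M →ₗ[B] (Fin m → B)),
      Function.Injective φ ∧
      ∀ (j : ℤ), ∀ x ∈ ℳ j, ∀ i : Fin m,
        φ x i ∈ (if 0 ≤ j - deg i then ℬ (j - deg i).toNat else (⊥ : Submodule k B)) := by
  classical
  haveI hFD : FiniteDimensional k B := hPD.finiteDimensional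
  haveI : Module.Finite k M := Module.Finite.trans B M
  -- The Frobenius functional `lam` on `B`.
  let bu := Module.basisUnique (Fin 1) hPD.top_rank
  let μ : Module.Dual k (ℬ d) := bu.coord 0
  have hμ : ∀ w : ℬ d, μ w = 0 → w = 0 := fun w hw => Module.basisUnique_repr_eq_zero_iff.mp hw
  let lam : B →ₗ[k] k := μ ∘ₗ ((DFinsupp.lapply d) ∘ₗ (DirectSum.decomposeLinearEquiv ℬ).toLinearMap)
  have hlam : ∀ c : B, lam c = μ (DirectSum.decompose ℬ c d) := fun c => rfl
  have lam_same : ∀ w ∈ ℬ d, w ≠ 0 → lam w ≠ 0 := by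
    intro w hw hw0
    rw [hlam]
    have : DirectSum.decompose ℬ w d = ⟨w, hw⟩ :=
      Subtype.ext (DirectSum.decompose_of_mem_same ℬ hw)
    rw [this]
    intro h
    exact hw0 (congrArg Subtype.val (hμ _ h))
  have lam_ne : ∀ (r : ℕ), r ≠ d → ∀ w ∈ ℬ r, lam w = 0 := by
    intro r hr w hw
    rw [hlam]
    have : DirectSum.decompose ℬ w d = 0 :=
      Subtype.ext (DirectSum.decompose_of_mem_ne ℬ hw hr)
    rw [this, map_zero]
  -- Nondegeneracy of the pairing on homogeneous components.
  have hle : ∀ (r : ℕ) (c : B), c ∈ ℬ r → c ≠ 0 → r ≤ d := by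
    intro r c hc hc0
    by_contra h
    push_neg at h
    rw [hPD.eq_bot_of_gt r h] at hc
    exact hc0 hc
  have hK : ∀ (r : ℕ), ∀ c ∈ ℬ r, c ≠ 0 → ∃ a ∈ ℬ (d - r), lam (a * c) ≠ 0 := by
    intro r c hc hc0
    have hrd : r ≤ d := hle r c hc hc0
    obtain ⟨z, hz, hzc⟩ := hPD.duality r hrd c hc hc0
    refine ⟨z, hz, ?_⟩
    have hmem : z * c ∈ ℬ d := by
      have := SetLike.mul_mem_graded hz hc
      rwa [Nat.sub_add_cancel hrd] at this
    exact lam_same _ hmem hzc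
  have hCore : ∀ (c : B) (r : ℕ), (DirectSum.decompose ℬ c r : B) ≠ 0 →
      ∃ a ∈ ℬ (d - r), lam (a * c) ≠ 0 ∧ r ≤ d := by
    intro c r hcr
    have hcrm : (DirectSum.decompose ℬ c r : B) ∈ ℬ r := SetLike.coe_mem _
    have hrd : r ≤ d := hle r _ hcrm hcr
    obtain ⟨a, ha, hac⟩ := hK r _ hcrm hcr
    refine ⟨a, ha, ?_, hrd⟩
    have hsum : ∑ r' ∈ (DirectSum.decompose ℬ c).support, (DirectSum.decompose ℬ c r' : B) = c :=
      DirectSum.sum_support_decompose ℬ c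
    have : lam (a * c)
        = ∑ r' ∈ (DirectSum.decompose ℬ c).support, lam (a * (DirectSum.decompose ℬ c r' : B)) := by
      conv_lhs => rw [← hsum]
      rw [Finset.mul_sum, map_sum]
    rw [this]
    rw [Finset.sum_eq_single_of_mem r]
    · exact hac
    · rw [DFinsupp.mem_support_iff]
      intro h0
      exact hcr (by rw [h0]; rfl)
    · intro r' _ hr'
      refine lam_ne (d - r + r') (by omega) _ ?_
      exact SetLike.mul_mem_graded ha (SetLike.coe_mem _)
  -- The Frobenius isomorphism `Ψ : B ≃ Dual B`.
  let ψ : B →ₗ[k] Module.Dual k B := ((LinearMap.mul k B).flip).compr₂ lam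
  have hψ : ∀ c a : B, ψ c a = lam (a * c) := fun c a => rfl
  have hψinj : Function.Injective ψ := by
    rw [← LinearMap.ker_eq_bot, LinearMap.ker_eq_bot']
    intro c hc
    by_contra hc0
    have : ∃ r : ℕ, (DirectSum.decompose ℬ c r : B) ≠ 0 := by
      by_contra h
      push_neg at h
      apply hc0
      rw [← DirectSum.sum_support_decompose ℬ c]
      exact Finset.sum_eq_zero fun r _ => h r
    obtain ⟨r, hr⟩ := this
    obtain ⟨a, _, hac, _⟩ := hCore c r hr
    exact hac (by rw [← hψ, hc]; rfl)
  have hdim : Module.finrank k B = Module.finrank k (Module.Dual k B) :=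
    (Subspace.dual_finrank_eq).symm
  have hψsurj : Function.Surjective ψ :=
    (LinearMap.injective_iff_surjective_of_finrank_eq_finrank hdim).mp hψinj
  let Ψ : B ≃ₗ[k] Module.Dual k B := LinearEquiv.ofBijective ψ ⟨hψinj, hψsurj⟩
  have hΨ : ∀ c a : B, Ψ c a = lam (a * c) := fun c a => rfl
  -- A homogeneous basis of `M` and its coordinate functionals.
  let σ : Type _ := Σ j : ℤ, Module.Free.ChooseBasisIndex k (ℳ j)
  let bC : ∀ j : ℤ, Module.Basis (Module.Free.ChooseBasisIndex k (ℳ j)) k (ℳ j) :=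
    fun j => Module.Free.chooseBasis k (ℳ j)
  let bD : Module.Basis σ k (DirectSum ℤ (fun j => ℳ j)) :=
    DFinsupp.basis bC
  let bM : Module.Basis σ k M :=
    bD.map (DirectSum.decomposeLinearEquiv ℳ).symm
  haveI : Fintype σ :=
    FiniteDimensional.fintypeBasisIndex bM
  have hrepr : ∀ (y : M) (s : σ),
      bM.repr y s = (bC s.1).repr (DirectSum.decompose ℳ y s.1) s.2 := by
    intro y s
    show (bD.map (DirectSum.decomposeLinearEquiv ℳ).symm).repr y s = _
    rw [Module.Basis.map_repr, LinearEquiv.trans_apply, LinearEquiv.symm_symm,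
      DirectSum.decomposeLinearEquiv_apply]
    show (DFinsupp.basis bC).repr (DirectSum.decompose ℳ y) s = _
    unfold DFinsupp.basis
    show ((DFinsupp.mapRange.linearEquiv fun i => (bC i).repr) ≪≫ₗ
      (sigmaFinsuppLequivDFinsupp k).symm) (DirectSum.decompose ℳ y) s = _
    rw [LinearEquiv.trans_apply]
    show sigmaFinsuppEquivDFinsupp.symm _ s = _
    rw [sigmaFinsuppEquivDFinsupp_symm_apply]
    erw [DFinsupp.mapRange_apply]
    exact fun i => map_zero _
  have hhom : ∀ (s : σ) (j' : ℤ), j' ≠ s.1 →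
      ∀ y ∈ ℳ j', bM.coord s y = 0 := by
    intro s j' hj' y hy
    rw [Module.Basis.coord_apply, hrepr]
    have : DirectSum.decompose ℳ y s.1 = 0 :=
      Subtype.ext (DirectSum.decompose_of_mem_ne ℳ hy hj')
    rw [this, map_zero]
    rfl
  -- The embedding.
  let m : ℕ := Fintype.card σ
  let e : σ ≃ Fin m := Fintype.equivFin σ
  let smulx : M → (B →ₗ[k] M) := fun x =>
    { toFun := fun a => a • x
      map_add' := fun a a' => add_smul a a' x
      map_smul' := fun s a => smul_assoc s a x }
  let φfun : M → (Fin m → B) := fun x i => Ψ.symm ((bM.coord (e.symm i)) ∘ₗ smulx x)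
  have hφkey : ∀ (x : M) (i : Fin m) (a : B), lam (a * φfun x i) = bM.coord (e.symm i) (a • x) := by
    intro x i a
    have : Ψ (φfun x i) = (bM.coord (e.symm i)) ∘ₗ smulx x := Ψ.apply_symm_apply _
    calc lam (a * φfun x i) = Ψ (φfun x i) a := rfl
    _ = ((bM.coord (e.symm i)) ∘ₗ smulx x) a := by rw [this]
    _ = bM.coord (e.symm i) (a • x) := rfl
  let φ : M →ₗ[B] (Fin m → B) :=
    { toFun := φfun
      map_add' := by
        intro x y
        funext i
        show Ψ.symm _ = Ψ.symm _ + Ψ.symm _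
        rw [← map_add]
        congr 1
        apply LinearMap.ext
        intro a
        show bM.coord (e.symm i) (a • (x + y)) = bM.coord (e.symm i) (a • x) + bM.coord (e.symm i) (a • y)
        rw [smul_add, map_add]
      map_smul' := by
        intro b x
        funext i
        show φfun (b • x) i = b • φfun x i
        rw [smul_eq_mul]
        apply Ψ.injective
        apply LinearMap.ext
        intro a
        have h1 : Ψ (φfun (b • x) i) a = lam (a * φfun (b • x) i) := rfl
        have h2 : Ψ (b * φfun x i) a = lam (a * (b * φfun x i)) := rfl
        rw [h1, h2, hφkey, ← mul_assoc]
        have h3 : lam (a * b * φfun x i) = bM.coord (e.symm i) ((a * b) • x) := hφkey x i (a * b)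
        rw [h3, mul_smul] }
  have hφ : ∀ (x : M) (i : Fin m), φ x i = φfun x i := fun x i => rfl
  refine ⟨m, fun i => (e.symm i).1 - d, φ, ?_, ?_⟩
  · -- injectivity
    rw [← LinearMap.ker_eq_bot, LinearMap.ker_eq_bot']
    intro x hx
    have hxz : ∀ s : σ, bM.coord s x = 0 := by
      intro s
      have h0 : φfun x (e s) = 0 := by rw [← hφ, hx]; rfl
      have h1 : lam (1 * φfun x (e s)) = bM.coord (e.symm (e s)) ((1 : B) • x) := hφkey x (e s) 1
      rw [h0, mul_zero, map_zero] at h1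
      rw [Equiv.symm_apply_apply, one_smul] at h1
      exact h1.symm
    have : bM.repr x = 0 := Finsupp.ext fun s => hxz s
    have := congrArg bM.repr.symm this
    simpa using this
  · -- gradedness
    intro j x hx i
    set t : ℤ := (e.symm i).1 with ht
    set c : B := φ x i with hc
    have hcv : ∀ a : B, lam (a * c) = bM.coord (e.symm i) (a • x) := fun a => hφkey x i a
    have hcomp : ∀ r : ℕ, (r : ℤ) ≠ j - (t - d) → (DirectSum.decompose ℬ c r : B) = 0 := by
      intro r hr
      by_contra h0
      obtain ⟨a, ha, hac, hrd⟩ := hCore c r h0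
      apply hac
      rw [hcv]
      have hmem : a • x ∈ ℳ (((d - r : ℕ) : ℤ) + j) := hMgr (d - r) j a ha x hx
      refine hhom (e.symm i) _ ?_ _ hmem
      have : ((d - r : ℕ) : ℤ) = (d : ℤ) - (r : ℤ) := by
        rw [Nat.cast_sub hrd]
      omega
    by_cases hpos : 0 ≤ j - ((e.symm i).1 - d)
    · rw [if_pos hpos]
      have hc' : c = ∑ r ∈ (DirectSum.decompose ℬ c).support, (DirectSum.decompose ℬ c r : B) :=
        (DirectSum.sum_support_decompose ℬ c).symm
      rw [hc']
      apply Submodule.sum_mem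
      intro r _
      by_cases hr : (r : ℤ) = j - (t - d)
      · have : r = (j - ((e.symm i).1 - d)).toNat := by omega
        rw [← this]
        exact SetLike.coe_mem _
      · rw [hcomp r hr]
        exact Submodule.zero_mem _
    · rw [if_neg hpos]
      rw [Submodule.mem_bot]
      rw [← DirectSum.sum_support_decompose ℬ c]
      apply Finset.sum_eq_zero
      intro r _
      apply hcomp
      omega
end

section
/- Let A be a P-algebra over a field k, let n be such that A is flat as a right A(n)-module, let M' be a finitely generated graded A(n)-module, and set M = A ⊗_{A(n)} M'. Then there is an injective A-module homomorphism from M into a finitely generated free A-module F whose cokernel is isomorphic to A ⊗_{A(n)} Q' for some finitely generated graded A(n)-module Q'. -/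
/-- The `A`-linear map `A^p → A^q` of left `A`-modules given by right multiplication by the
matrix `T`, i.e. `v ↦ (∑ᵢ vᵢ * Tᵢⱼ)ⱼ`.  Every homomorphism of finitely generated free left
`A`-modules has this form. -/
def rightMulMatrix {A : Type*} [Ring A] {p q : ℕ} (T : Fin p → Fin q → A) :
    (Fin p → A) →ₗ[A] (Fin q → A) where
  toFun v := fun j => ∑ i, v i * T i j
  map_add' v w := by
    funext j
    simp [add_mul, Finset.sum_add_distrib]
  map_smul' a v := by
    funext j
    simp [Finset.mul_sum, mul_assoc]

/-- An `A`-module `M` is induced (extended) from a finitely generated graded module over a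
graded subalgebra `S ⊆ A`, i.e. `M ≅ A ⊗_S M'` for some finitely generated graded
`S`-module `M'`, exactly when `M` admits a finite presentation by a matrix `T` whose entries
lie in `S` and are homogeneous of the appropriate degrees: `M'` is then the `S`-module
presented by the same matrix. -/
def IsInducedFrom {k A : Type*} [Field k] [Ring A] [Algebra k A]
    (𝒜 : ℕ → Submodule k A) (S : Subalgebra k A)
    (M : Type*) [AddCommGroup M] [Module A M] : Prop :=
  ∃ (p q : ℕ) (T : Fin p → Fin q → A) (dp : Fin p → ℤ) (dq : Fin q → ℤ),
    (∀ i j, T i j ∈ S) ∧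
    (∀ i j, T i j ∈
      (if 0 ≤ dp i - dq j then 𝒜 (dp i - dq j).toNat else (⊥ : Submodule k A))) ∧
    Nonempty (M ≃ₗ[A] ((Fin q → A) ⧸ LinearMap.range (rightMulMatrix T)))

section Aux
open DirectSum Module

section Graded
variable {k A : Type*} [Field k] [Ring A] [Algebra k A]
  (𝒜 : ℕ → Submodule k A) [GradedAlgebra 𝒜]

/-- degree-`c` component as a `k`-linear map. -/
noncomputable def projA (c : ℕ) : A →ₗ[k] A :=
  (𝒜 c).subtype ∘ₗ (DFinsupp.lapply c) ∘ₗ (DirectSum.decomposeLinearEquiv 𝒜).toLinearMap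

@[simp] lemma projA_apply (c : ℕ) (x : A) :
    projA 𝒜 c x = (DirectSum.decompose 𝒜 x c : A) := rfl

lemma projA_mem (c : ℕ) (x : A) : projA 𝒜 c x ∈ 𝒜 c := (DirectSum.decompose 𝒜 x c).2

lemma projA_of_mem_same {c : ℕ} {x : A} (h : x ∈ 𝒜 c) : projA 𝒜 c x = x :=
  DirectSum.decompose_of_mem_same 𝒜 h

lemma projA_of_mem_ne {c s : ℕ} {x : A} (h : x ∈ 𝒜 s) (hne : s ≠ c) : projA 𝒜 c x = 0 := by
  simpa using DirectSum.decompose_of_mem_ne 𝒜 h hne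

lemma projA_hom_mul {a : ℕ} {g : A} (hg : g ∈ 𝒜 a) (c : ℕ) (y : A) :
    projA 𝒜 c (g * y) = if a ≤ c then g * projA 𝒜 (c - a) y else 0 := by
  induction y using DirectSum.Decomposition.inductionOn 𝒜 with
  | zero => simp
  | @homogeneous s m =>
    have hm : (m : A) ∈ 𝒜 s := m.2
    have hgm : g * (m : A) ∈ 𝒜 (a + s) := SetLike.mul_mem_graded hg hm
    by_cases hc : c = a + s
    · subst hc
      rw [projA_of_mem_same 𝒜 hgm, if_pos (Nat.le_add_right a s)]
      rw [Nat.add_sub_cancel_left, projA_of_mem_same 𝒜 hm]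
    · rw [projA_of_mem_ne 𝒜 hgm (fun h => hc h.symm)]
      by_cases hac : a ≤ c
      · rw [if_pos hac]
        have : s ≠ c - a := by omega
        rw [projA_of_mem_ne 𝒜 hm this, mul_zero]
      · rw [if_neg hac]
  | add x y hx hy =>
    rw [mul_add, map_add, hx, hy, map_add]
    split <;> simp [mul_add]

lemma projA_mem_subalgebra {F : Subalgebra k A}
    (hgr : F.toSubmodule = ⨆ i, 𝒜 i ⊓ F.toSubmodule) {x : A} (hx : x ∈ F) (c : ℕ) :
    projA 𝒜 c x ∈ F := by
  have hx' : x ∈ ⨆ i, 𝒜 i ⊓ F.toSubmodule := by rw [← hgr]; exact hx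
  refine Submodule.iSup_induction (motive := fun y => projA 𝒜 c y ∈ F) _ hx' ?_ (by simpa using zero_mem F) ?_
  · rintro i y ⟨hy1, hy2⟩
    by_cases h : i = c
    · subst h; rw [projA_of_mem_same 𝒜 hy1]; exact hy2
    · rw [projA_of_mem_ne 𝒜 hy1 h]; exact zero_mem _
  · intro a b ha hb
    rw [map_add]; exact add_mem ha hb

lemma sum_support_projA [∀ (i : ℕ) (x : 𝒜 i), Decidable (x ≠ 0)] (x : A) :
    ∑ c ∈ (DirectSum.decompose 𝒜 x).support, projA 𝒜 c x = x := by
  simpa using DirectSum.sum_support_decompose 𝒜 x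

lemma projA_eq_zero_of_not_mem_support [∀ (i : ℕ) (x : 𝒜 i), Decidable (x ≠ 0)] (x : A)
    {c : ℕ} (h : c ∉ (DirectSum.decompose 𝒜 x).support) : projA 𝒜 c x = 0 := by
  rw [DFinsupp.notMem_support_iff] at h
  simp [h]

end Graded

section Lam
variable {k A : Type*} [Field k] [Ring A] [Algebra k A]
  (𝒜 : ℕ → Submodule k A) [GradedAlgebra 𝒜]

set_option synthInstance.maxHeartbeats 800000 in
lemma lam_exists (d : ℕ) (B : Submodule k A)
    (htop : Module.finrank k ↥(𝒜 d ⊓ B) = 1) :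
    ∃ lam : A →ₗ[k] k,
      (∀ s, s ≠ d → ∀ x ∈ 𝒜 s, lam x = 0) ∧
      (∀ y ∈ 𝒜 d ⊓ B, y ≠ 0 → lam y ≠ 0) := by
  classical
  obtain ⟨v, hv0, hv⟩ := finrank_eq_one_iff'.mp htop
  set w : ↥(𝒜 d) := ⟨(v : A), v.2.1⟩ with hw
  have hw0 : w ≠ 0 := by
    intro h
    apply hv0
    apply Subtype.ext
    have h' := congrArg Subtype.val h
    exact h'
  obtain ⟨ℓ0, hℓ0⟩ : ∃ ℓ0 : Module.Dual k ↥(𝒜 d), ℓ0 w ≠ 0 := by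
    by_contra h
    push_neg at h
    exact hw0 ((Module.forall_dual_apply_eq_zero_iff k w).mp h)
  set pr : A →ₗ[k] ↥(𝒜 d) :=
    (DFinsupp.lapply d) ∘ₗ (DirectSum.decomposeLinearEquiv 𝒜).toLinearMap with hpr
  have hpr_apply : ∀ x : A, pr x = DirectSum.decompose 𝒜 x d := fun _ => rfl
  refine ⟨ℓ0 ∘ₗ pr, ?_, ?_⟩
  · intro s hs x hx
    have : (DirectSum.decompose 𝒜 x d : A) = 0 := DirectSum.decompose_of_mem_ne 𝒜 hx hs
    have h2 : DirectSum.decompose 𝒜 x d = 0 := Subtype.ext this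
    simp [hpr_apply, h2]
  · intro y hy hy0
    obtain ⟨c, hc⟩ := hv ⟨y, hy⟩
    have hcy : (c • (v : A)) = y := congrArg Subtype.val hc
    have hc0 : c ≠ 0 := by
      rintro rfl
      apply hy0
      simpa using hcy.symm
    have hyd : (DirectSum.decompose 𝒜 y d : A) = y := DirectSum.decompose_of_mem_same 𝒜 hy.1
    have h2 : DirectSum.decompose 𝒜 y d = (⟨y, hy.1⟩ : ↥(𝒜 d)) := Subtype.ext hyd
    have h3 : (⟨y, hy.1⟩ : ↥(𝒜 d)) = c • w := by
      apply Subtype.ext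
      simpa using hcy.symm
    simp only [LinearMap.comp_apply, hpr_apply, h2, h3, map_smul, smul_eq_mul]
    exact mul_ne_zero hc0 hℓ0

end Lam

section Nondeg
variable {k A : Type*} [Field k] [Ring A] [Algebra k A]
  (𝒜 : ℕ → Submodule k A) [GradedAlgebra 𝒜]
  {F : Subalgebra k A} {d : ℕ} (lam : A →ₗ[k] k)
  (hl1 : ∀ s, s ≠ d → ∀ x ∈ 𝒜 s, lam x = 0)
  (hl2 : ∀ y ∈ 𝒜 d ⊓ Subalgebra.toSubmodule F, y ≠ 0 → lam y ≠ 0)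
  [hFD : FiniteDimensional k ↥(Subalgebra.toSubmodule F)]
  (hdual : ∀ j, j ≤ d → ∀ x ∈ 𝒜 j ⊓ Subalgebra.toSubmodule F, x ≠ 0 →
    ∃ z ∈ 𝒜 (d - j) ⊓ Subalgebra.toSubmodule F, z * x ≠ 0)

local notation "B" => Subalgebra.toSubmodule F

/-- pairing map on a homogeneous piece. -/
noncomputable def Phi (j : ℕ) : ↥(𝒜 j ⊓ B) →ₗ[k] Module.Dual k ↥(𝒜 (d - j) ⊓ B) where
  toFun x :=
    { toFun := fun z => lam ((z : A) * (x : A))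
      map_add' := by intro z w; simp [add_mul]
      map_smul' := by intro c z; simp [smul_mul_assoc] }
  map_add' := by intro x y; ext z; simp [mul_add]
  map_smul' := by intro c x; ext z; simp [mul_smul_comm]

include hl2 hdual in
lemma Phi_injective (j : ℕ) (hj : j ≤ d) :
    Function.Injective (Phi (F := F) (d := d) 𝒜 lam j) := by
  rw [injective_iff_map_eq_zero]
  intro x hx
  by_contra hx0
  have hxA : (x : A) ≠ 0 := fun h => hx0 (Subtype.ext h)
  obtain ⟨z, hz, hzx⟩ := hdual j hj (x : A) x.2 hxA
  have hmem : z * (x : A) ∈ 𝒜 d ⊓ B := by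
    refine ⟨?_, show z * (x : A) ∈ F from F.mul_mem hz.2 x.2.2⟩
    have := SetLike.mul_mem_graded hz.1 x.2.1
    rwa [Nat.sub_add_cancel hj] at this
  have := hl2 _ hmem hzx
  apply this
  have : (Phi (F := F) (d := d) 𝒜 lam j x) ⟨z, hz⟩ = 0 := by rw [hx]; rfl
  exact this

include hl2 hdual in
lemma finrank_piece_le (j : ℕ) (hj : j ≤ d) :
    finrank k ↥(𝒜 j ⊓ B) ≤ finrank k ↥(𝒜 (d - j) ⊓ B) := by
  haveI : FiniteDimensional k ↥(𝒜 (d - j) ⊓ B) :=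
    Submodule.finiteDimensional_of_le inf_le_right
  haveI : FiniteDimensional k ↥(𝒜 j ⊓ B) :=
    Submodule.finiteDimensional_of_le inf_le_right
  have h := LinearMap.finrank_le_finrank_of_injective
    (Phi_injective (F := F) 𝒜 lam hl2 hdual j hj)
  rwa [Subspace.dual_finrank_eq] at h

include hl2 hdual in
lemma finrank_piece_eq (j : ℕ) (hj : j ≤ d) :
    finrank k ↥(𝒜 j ⊓ B) = finrank k ↥(𝒜 (d - j) ⊓ B) := by
  have h1 := finrank_piece_le (F := F) 𝒜 lam hl2 hdual j hj
  have h2 := finrank_piece_le (F := F) 𝒜 lam hl2 hdual (d - j) (Nat.sub_le d j)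
  rw [Nat.sub_sub_self hj] at h2
  omega

include hl2 hdual in
lemma right_nondeg_hom (j : ℕ) (hj : j ≤ d) (z : A) (hz : z ∈ 𝒜 (d - j) ⊓ B) (hz0 : z ≠ 0) :
    ∃ x ∈ 𝒜 j ⊓ B, lam (z * x) ≠ 0 := by
  haveI : FiniteDimensional k ↥(𝒜 (d - j) ⊓ B) :=
    Submodule.finiteDimensional_of_le inf_le_right
  haveI : FiniteDimensional k ↥(𝒜 j ⊓ B) :=
    Submodule.finiteDimensional_of_le inf_le_right
  have hbij : Function.Bijective (Phi (F := F) (d := d) 𝒜 lam j) := by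
    refine ⟨Phi_injective (F := F) (d := d) 𝒜 lam hl2 hdual j hj, ?_⟩
    apply (LinearMap.injective_iff_surjective_of_finrank_eq_finrank ?_).mp
      (Phi_injective (F := F) (d := d) 𝒜 lam hl2 hdual j hj)
    rw [Subspace.dual_finrank_eq]
    exact finrank_piece_eq (F := F) (d := d) 𝒜 lam hl2 hdual j hj
  set zz : ↥(𝒜 (d - j) ⊓ B) := ⟨z, hz⟩ with hzz
  have hzz0 : zz ≠ 0 := fun h => hz0 (by simpa [hzz] using congrArg Subtype.val h)
  obtain ⟨ξ, hξ⟩ : ∃ ξ : Module.Dual k ↥(𝒜 (d - j) ⊓ B), ξ zz ≠ 0 := by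
    by_contra h
    push_neg at h
    exact hzz0 ((Module.forall_dual_apply_eq_zero_iff k zz).mp h)
  obtain ⟨x, hx⟩ := hbij.2 ξ
  refine ⟨(x : A), x.2, ?_⟩
  have : (Phi (F := F) (d := d) 𝒜 lam j x) zz = lam (z * (x : A)) := rfl
  rw [hx] at this
  rw [← this]
  exact hξ

section NB
variable (hgr : Subalgebra.toSubmodule F = ⨆ i, 𝒜 i ⊓ Subalgebra.toSubmodule F)
  (hbot : ∀ j, d < j → 𝒜 j ⊓ Subalgebra.toSubmodule F = ⊥)

-- copy of projA_mem_subalgebra (final file has it once)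
include hgr in
lemma projA_mem_subalgebra' {x : A} (hx : x ∈ F) (c : ℕ) : projA 𝒜 c x ∈ F := by
  have hx' : x ∈ ⨆ i, 𝒜 i ⊓ Subalgebra.toSubmodule F := by rw [← hgr]; exact hx
  refine Submodule.iSup_induction (motive := fun y => projA 𝒜 c y ∈ F) _ hx'
    ?_ (by simpa using zero_mem F) ?_
  · rintro i y ⟨hy1, hy2⟩
    by_cases h : i = c
    · subst h; rw [projA_of_mem_same 𝒜 hy1]; exact hy2
    · rw [projA_of_mem_ne 𝒜 hy1 h]; exact zero_mem _
  · intro a b ha hb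
    rw [map_add]; exact add_mem ha hb

include hgr hbot in
lemma exists_proj_ne {y : A} (hy : y ∈ F) (hy0 : y ≠ 0) :
    ∃ s, s ≤ d ∧ projA 𝒜 s y ≠ 0 ∧ projA 𝒜 s y ∈ 𝒜 s ⊓ Subalgebra.toSubmodule F := by
  classical
  obtain ⟨s, hs⟩ : ∃ s, projA 𝒜 s y ≠ 0 := by
    by_contra h
    push_neg at h
    apply hy0
    have := DirectSum.sum_support_decompose 𝒜 y
    rw [← this]
    exact Finset.sum_eq_zero fun s _ => h s
  have hmem : projA 𝒜 s y ∈ 𝒜 s ⊓ Subalgebra.toSubmodule F :=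
    ⟨projA_mem 𝒜 s y, projA_mem_subalgebra' 𝒜 hgr hy s⟩
  refine ⟨s, ?_, hs, hmem⟩
  by_contra h
  push_neg at h
  rw [hbot s h] at hmem
  exact hs hmem

include hl1 hl2 hdual hgr hbot in
lemma left_nondeg {y : A} (hy : y ∈ F) (hy0 : y ≠ 0) :
    ∃ b ∈ F, lam (b * y) ≠ 0 := by
  classical
  obtain ⟨s, hsd, hs0, hsmem⟩ := exists_proj_ne (F := F) (d := d) 𝒜 hgr hbot hy hy0
  obtain ⟨z, hz, hzx⟩ := hdual s hsd _ hsmem hs0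
  refine ⟨z, hz.2, ?_⟩
  have hlam : lam (z * projA 𝒜 s y) ≠ 0 := by
    apply hl2
    · refine ⟨?_, show z * projA 𝒜 s y ∈ F from F.mul_mem hz.2
        (projA_mem_subalgebra' 𝒜 hgr hy s)⟩
      have := SetLike.mul_mem_graded hz.1 (projA_mem 𝒜 s y)
      rwa [Nat.sub_add_cancel hsd] at this
    · exact hzx
  have hzy : z * y = ∑ s' ∈ (DirectSum.decompose 𝒜 y).support, z * projA 𝒜 s' y := by
    conv_lhs => rw [← DirectSum.sum_support_decompose 𝒜 y]
    rw [Finset.mul_sum]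
    rfl
  have hsum : lam (z * y) = ∑ s' ∈ (DirectSum.decompose 𝒜 y).support,
      lam (z * projA 𝒜 s' y) := by rw [hzy, map_sum]
  rw [hsum]
  rw [Finset.sum_eq_single s]
  · exact hlam
  · intro s' _ hne
    apply hl1 ((d - s) + s') (by omega)
    exact SetLike.mul_mem_graded hz.1 (projA_mem 𝒜 s' y)
  · intro h
    rw [DFinsupp.notMem_support_iff] at h
    exfalso
    apply hs0
    simpa using congrArg Subtype.val h

include hl1 hl2 hdual hgr hbot in
lemma right_nondeg {y : A} (hy : y ∈ F) (hy0 : y ≠ 0) :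
    ∃ b ∈ F, lam (y * b) ≠ 0 := by
  classical
  obtain ⟨s, hsd, hs0, hsmem⟩ := exists_proj_ne (F := F) (d := d) 𝒜 hgr hbot hy hy0
  have hsmem' : projA 𝒜 s y ∈ 𝒜 (d - (d - s)) ⊓ Subalgebra.toSubmodule F := by
    rwa [Nat.sub_sub_self hsd]
  obtain ⟨x, hx, hlam⟩ := right_nondeg_hom (F := F) (d := d) 𝒜 lam hl2 hdual (d - s)
    (Nat.sub_le d s) _ hsmem' hs0
  refine ⟨x, hx.2, ?_⟩
  have hyx : y * x = ∑ s' ∈ (DirectSum.decompose 𝒜 y).support, projA 𝒜 s' y * x := by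
    conv_lhs => rw [← DirectSum.sum_support_decompose 𝒜 y]
    rw [Finset.sum_mul]
    rfl
  rw [hyx, map_sum, Finset.sum_eq_single s]
  · exact hlam
  · intro s' _ hne
    apply hl1 (s' + (d - s)) (by omega)
    exact SetLike.mul_mem_graded (projA_mem 𝒜 s' y) hx.1
  · intro h
    rw [DFinsupp.notMem_support_iff] at h
    exfalso
    apply hs0
    simpa using congrArg Subtype.val h


include hl1 hl2 hdual hgr hbot in
lemma dual_ann {p q : ℕ} (T : Fin p → Fin q → A) (hTB : ∀ r i, T r i ∈ F)
    (x : Fin q → A) (hxB : ∀ i, x i ∈ F)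
    (hx : ∀ u : Fin q → A, (∀ i, u i ∈ F) → (∀ r, ∑ i, T r i * u i = 0) →
      ∑ i, x i * u i = 0) :
    ∃ c : Fin p → A, (∀ r, c r ∈ F) ∧ ∀ i, x i = ∑ r, c r * T r i := by
  classical
  set Bs := Subalgebra.toSubmodule F with hBs
  -- the submodule of vectors with entries in `F`
  set BtoA : (Fin q → ↥Bs) →ₗ[k] (Fin q → A) :=
    LinearMap.pi (fun i => Bs.subtype ∘ₗ LinearMap.proj i) with hBtoA
  set W : Submodule k (Fin q → A) := LinearMap.range BtoA with hWdef
  have hW : ∀ y : Fin q → A, y ∈ W ↔ ∀ i, y i ∈ F := by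
    intro y
    constructor
    · rintro ⟨z, rfl⟩ i
      exact (z i).2
    · intro hy
      exact ⟨fun i => ⟨y i, hy i⟩, rfl⟩
  haveI : FiniteDimensional k ↥W := by
    have : FiniteDimensional k (Fin q → ↥Bs) := by infer_instance
    exact LinearMap.finiteDimensional_range BtoA
  -- the row space of `T` over `F`
  set Rmap : (Fin p → A) →ₗ[k] (Fin q → A) :=
    { toFun := fun c i => ∑ r, c r * T r i
      map_add' := by intro c1 c2; funext i; simp [add_mul, Finset.sum_add_distrib]
      map_smul' := by intro a c; funext i; simp [Finset.smul_sum, smul_mul_assoc] }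
    with hRmap
  set R : Submodule k (Fin q → A) :=
    Submodule.map Rmap (Submodule.pi Set.univ fun _ => Bs) with hRdef
  have hRmem : ∀ y : Fin q → A, y ∈ R ↔
      ∃ c : Fin p → A, (∀ r, c r ∈ F) ∧ ∀ i, y i = ∑ r, c r * T r i := by
    intro y
    constructor
    · rintro ⟨c, hc, rfl⟩
      exact ⟨c, fun r => hc r (Set.mem_univ r), fun i => rfl⟩
    · rintro ⟨c, hc, hy⟩
      exact ⟨c, fun r _ => hc r, by funext i; exact (hy i).symm⟩
  have hRW : R ≤ W := by
    intro y hy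
    rw [hRmem] at hy
    obtain ⟨c, hc, hy⟩ := hy
    rw [hW]
    intro i
    rw [hy i]
    exact Subalgebra.sum_mem F fun r _ => F.mul_mem (hc r) (hTB r i)
  set R'' : Submodule k ↥W := R.comap W.subtype with hR''def
  have hR''mem : ∀ y : ↥W, y ∈ R'' ↔ (y : Fin q → A) ∈ R := fun y => Iff.rfl
  -- the pairing on `W`
  set PairW : ↥W →ₗ[k] ↥W →ₗ[k] k :=
    LinearMap.mk₂ k (fun y u => lam (∑ i, (y : Fin q → A) i * (u : Fin q → A) i))
      (by intro y z u
          simp only [Submodule.coe_add, Pi.add_apply, add_mul, Finset.sum_add_distrib,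
            map_add])
      (by intro c y u
          simp only [SetLike.val_smul, Pi.smul_apply, smul_mul_assoc, ← Finset.smul_sum,
            map_smul, smul_eq_mul, RingHom.id_apply])
      (by intro y u v
          simp only [Submodule.coe_add, Pi.add_apply, mul_add, Finset.sum_add_distrib,
            map_add])
      (by intro c y u
          simp only [SetLike.val_smul, Pi.smul_apply, mul_smul_comm, ← Finset.smul_sum,
            map_smul, smul_eq_mul, RingHom.id_apply])
    with hPairW
  have hPairW_apply : ∀ y u : ↥W,
      PairW y u = lam (∑ i, (y : Fin q → A) i * (u : Fin q → A) i) := fun y u => rfl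
  -- nondegeneracy of the pairing
  have hN2 : ∀ y : ↥W, (∀ u : ↥W, PairW y u = 0) → y = 0 := by
    intro y hy
    by_contra hy0
    have : (y : Fin q → A) ≠ 0 := fun h => hy0 (Subtype.ext h)
    obtain ⟨i, hi⟩ : ∃ i, (y : Fin q → A) i ≠ 0 := by
      by_contra h
      push_neg at h
      exact this (funext h)
    obtain ⟨b, hbF, hbl⟩ := right_nondeg (F := F) (d := d) 𝒜 lam hl1 hl2 hdual hgr hbot
      ((hW _).mp y.2 i) hi
    have hbW : (Pi.single i b : Fin q → A) ∈ W := by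
      rw [hW]
      intro i'
      by_cases h : i' = i
      · subst h; rw [Pi.single_eq_same]; exact hbF
      · rw [Pi.single_eq_of_ne h]; exact F.zero_mem
    apply hbl
    have := hy ⟨Pi.single i b, hbW⟩
    rw [hPairW_apply] at this
    rw [← this]
    congr 1
    rw [Finset.sum_eq_single i]
    · simp
    · intro i' _ hne
      simp [Pi.single_eq_of_ne hne]
    · simp
  have hN1 : ∀ u : ↥W, (∀ y : ↥W, PairW y u = 0) → u = 0 := by
    intro u hu
    by_contra hu0
    have : (u : Fin q → A) ≠ 0 := fun h => hu0 (Subtype.ext h)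
    obtain ⟨i, hi⟩ : ∃ i, (u : Fin q → A) i ≠ 0 := by
      by_contra h
      push_neg at h
      exact this (funext h)
    obtain ⟨b, hbF, hbl⟩ := left_nondeg (F := F) (d := d) 𝒜 lam hl1 hl2 hdual hgr hbot
      ((hW _).mp u.2 i) hi
    have hbW : (Pi.single i b : Fin q → A) ∈ W := by
      rw [hW]
      intro i'
      by_cases h : i' = i
      · subst h; rw [Pi.single_eq_same]; exact hbF
      · rw [Pi.single_eq_of_ne h]; exact F.zero_mem
    apply hbl
    have := hu ⟨Pi.single i b, hbW⟩
    rw [hPairW_apply] at this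
    rw [← this]
    congr 1
    rw [Finset.sum_eq_single i]
    · simp
    · intro i' _ hne
      simp [Pi.single_eq_of_ne hne]
    · simp
  -- the two curried maps are bijective
  have he1inj : Function.Injective (PairW : ↥W →ₗ[k] Module.Dual k ↥W) := by
    rw [injective_iff_map_eq_zero]
    intro y hy
    exact hN2 y fun u => by simpa using LinearMap.congr_fun hy u
  have he2inj : Function.Injective (PairW.flip : ↥W →ₗ[k] Module.Dual k ↥W) := by
    rw [injective_iff_map_eq_zero]
    intro u hu
    exact hN1 u fun y => by simpa using LinearMap.congr_fun hu y
  have hdualrank : Module.finrank k (Module.Dual k ↥W) = Module.finrank k ↥W :=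
    Subspace.dual_finrank_eq
  have he1bij : Function.Bijective (PairW : ↥W →ₗ[k] Module.Dual k ↥W) :=
    ⟨he1inj, (LinearMap.injective_iff_surjective_of_finrank_eq_finrank
      hdualrank.symm).mp he1inj⟩
  have he2bij : Function.Bijective (PairW.flip : ↥W →ₗ[k] Module.Dual k ↥W) :=
    ⟨he2inj, (LinearMap.injective_iff_surjective_of_finrank_eq_finrank
      hdualrank.symm).mp he2inj⟩
  -- the orthogonal of `R` and its double orthogonal
  set V'' : Submodule k ↥W := (R''.dualAnnihilator).comap PairW.flip with hV''def
  have hV''mem : ∀ u : ↥W, u ∈ V'' ↔ ∀ y ∈ R'', PairW y u = 0 := by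
    intro u
    rw [hV''def, Submodule.mem_comap, Submodule.mem_dualAnnihilator]
    exact Iff.rfl
  set L'' : Submodule k ↥W := (V''.dualAnnihilator).comap (PairW : ↥W →ₗ[k] Module.Dual k ↥W)
    with hL''def
  have hL''mem : ∀ y : ↥W, y ∈ L'' ↔ ∀ u ∈ V'', PairW y u = 0 := by
    intro y
    rw [hL''def, Submodule.mem_comap, Submodule.mem_dualAnnihilator]
  -- dimension count
  have hrank : ∀ (U : Submodule k ↥W) (e : ↥W →ₗ[k] Module.Dual k ↥W),
      Function.Bijective e →
      Module.finrank k ↥(U.dualAnnihilator.comap e) + Module.finrank k ↥U =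
        Module.finrank k ↥W := by
    intro U e he
    have h1 : Module.finrank k ↥(U.dualAnnihilator.comap e) =
        Module.finrank k ↥U.dualAnnihilator := by
      have := (Submodule.comap_equiv_eq_map_symm (LinearEquiv.ofBijective e he)
        U.dualAnnihilator)
      rw [show (U.dualAnnihilator.comap e) =
          (U.dualAnnihilator.comap (LinearEquiv.ofBijective e he : ↥W →ₗ[k] _)) from rfl,
        this]
      exact LinearEquiv.finrank_map_eq _ _
    rw [h1]
    have h2 : Module.finrank k (↥W ⧸ U) = Module.finrank k ↥U.dualAnnihilator :=
      (Subspace.quotEquivAnnihilator U).finrank_eq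
    rw [← h2]
    exact Submodule.finrank_quotient_add_finrank U
  have hrankV : Module.finrank k ↥V'' + Module.finrank k ↥R'' = Module.finrank k ↥W :=
    hrank R'' PairW.flip he2bij
  have hrankL : Module.finrank k ↥L'' + Module.finrank k ↥V'' = Module.finrank k ↥W :=
    hrank V'' PairW he1bij
  have hRL : R'' ≤ L'' := by
    intro y hy
    rw [hL''mem]
    intro u hu
    rw [hV''mem] at hu
    exact hu y hy
  have hLR : L'' = R'' := by
    refine (Submodule.eq_of_le_of_finrank_le hRL ?_).symm
    omega
  -- membership of `x` in the double orthogonal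
  have hxW : x ∈ W := (hW x).mpr hxB
  have hrowsR : ∀ r : Fin p, (fun i => T r i) ∈ R := by
    intro r
    rw [hRmem]
    refine ⟨fun r' => if r' = r then 1 else 0, ?_, ?_⟩
    · intro r'
      dsimp only
      split
      · exact F.one_mem
      · exact F.zero_mem
    · intro i
      rw [Finset.sum_eq_single r] <;> simp +contextual
  -- elements of `V''` genuinely annihilate `R`
  have hVann : ∀ u : ↥W, u ∈ V'' → ∀ y ∈ R, ∑ i, y i * (u : Fin q → A) i = 0 := by
    intro u hu y hyR
    by_contra hne
    have hmemsum : (∑ i, y i * (u : Fin q → A) i) ∈ F :=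
      Subalgebra.sum_mem F fun i _ => F.mul_mem ((hW _).mp (hRW hyR) i) ((hW _).mp u.2 i)
    obtain ⟨b, hbF, hbl⟩ := left_nondeg (F := F) (d := d) 𝒜 lam hl1 hl2 hdual hgr hbot
      hmemsum hne
    apply hbl
    have hby : (fun i => b * y i) ∈ R := by
      rw [hRmem] at hyR ⊢
      obtain ⟨c, hc, hy⟩ := hyR
      refine ⟨fun r => b * c r, fun r => F.mul_mem hbF (hc r), fun i => ?_⟩
      rw [hy i, Finset.mul_sum]
      simp [mul_assoc]
    have hbyW : (fun i => b * y i) ∈ W := hRW hby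
    have := (hV''mem u).mp hu ⟨(fun i => b * y i), hbyW⟩ ((hR''mem _).mpr hby)
    rw [hPairW_apply] at this
    rw [← this]
    congr 1
    rw [Finset.mul_sum]
    exact Finset.sum_congr rfl fun i _ => (mul_assoc b (y i) ((u : Fin q → A) i)).symm
  have hxL : (⟨x, hxW⟩ : ↥W) ∈ L'' := by
    rw [hL''mem]
    intro u hu
    rw [hPairW_apply]
    have h0 : ∑ i, x i * (u : Fin q → A) i = 0 := by
      apply hx
      · exact (hW _).mp u.2
      · intro r
        have := hVann u hu _ (hrowsR r)
        simpa using this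
    rw [h0, map_zero]
  rw [hLR, hR''mem] at hxL
  rw [hRmem] at hxL
  exact hxL

end NB
end Nondeg

lemma flat_matrix {k A : Type*} [Field k] [Ring A] [Algebra k A] (S : Subalgebra k A)
    (hflat : ∀ (m : ℕ) (x : Fin m → A), (∀ i, x i ∈ S) → ∀ a : Fin m → A,
      ∑ i, a i * x i = 0 →
      ∃ (p : ℕ) (c : Fin p → A) (r : Fin p → Fin m → A),
        (∀ j i, r j i ∈ S) ∧ (∀ i, a i = ∑ j, c j * r j i) ∧
        (∀ j, ∑ i, r j i * x i = 0)) :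
    ∀ (N : ℕ) (q : ℕ) (cols : Fin N → Fin q → A), (∀ j i, cols j i ∈ S) →
    ∀ a : Fin q → A, (∀ j, ∑ i, a i * cols j i = 0) →
    ∃ (P : ℕ) (c : Fin P → A) (r : Fin P → Fin q → A),
      (∀ s i, r s i ∈ S) ∧ (∀ i, a i = ∑ s, c s * r s i) ∧
      (∀ s j, ∑ i, r s i * cols j i = 0) := by
  intro N
  induction N with
  | zero =>
    intro q cols _ a _
    refine ⟨q, a, fun s i => if s = i then 1 else 0, ?_, ?_, ?_⟩
    · intro s i
      dsimp only
      split
      · exact S.one_mem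
      · exact S.zero_mem
    · intro i
      rw [Finset.sum_eq_single i] <;> simp +contextual
    · intro s j
      exact absurd j.2 (by simp)
  | succ N ih =>
    intro q cols hcolsS a ha
    obtain ⟨p₁, c₁, r₁, hr₁S, hac, hrx⟩ := hflat q (cols 0) (hcolsS 0) a (ha 0)
    set cols' : Fin N → Fin p₁ → A := fun j' jr => ∑ i, r₁ jr i * cols j'.succ i with hcols'
    have hcols'S : ∀ j' jr, cols' j' jr ∈ S := by
      intro j' jr
      exact Subalgebra.sum_mem S fun i _ => S.mul_mem (hr₁S jr i) (hcolsS j'.succ i)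
    have hc₁ : ∀ j', ∑ jr, c₁ jr * cols' j' jr = 0 := by
      intro j'
      calc ∑ jr, c₁ jr * cols' j' jr
          = ∑ jr, ∑ i, c₁ jr * (r₁ jr i * cols j'.succ i) := by
            simp [hcols', Finset.mul_sum]
        _ = ∑ i, (∑ jr, c₁ jr * r₁ jr i) * cols j'.succ i := by
            rw [Finset.sum_comm]
            simp [Finset.sum_mul, mul_assoc]
        _ = ∑ i, a i * cols j'.succ i := by
            refine Finset.sum_congr rfl fun i _ => by rw [← hac i]
        _ = 0 := ha j'.succ
    obtain ⟨P, e, Smat, hSmatS, hce, hScols'⟩ := ih p₁ cols' hcols'S c₁ hc₁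
    refine ⟨P, e, fun s i => ∑ jr, Smat s jr * r₁ jr i, ?_, ?_, ?_⟩
    · intro s i
      exact Subalgebra.sum_mem S fun jr _ => S.mul_mem (hSmatS s jr) (hr₁S jr i)
    · intro i
      calc a i = ∑ jr, c₁ jr * r₁ jr i := hac i
        _ = ∑ jr, (∑ s, e s * Smat s jr) * r₁ jr i := by
            refine Finset.sum_congr rfl fun jr _ => by rw [← hce jr]
        _ = ∑ jr, ∑ s, e s * (Smat s jr * r₁ jr i) := by
            simp [Finset.sum_mul, mul_assoc]
        _ = ∑ s, e s * ∑ jr, Smat s jr * r₁ jr i := by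
            rw [Finset.sum_comm]
            simp [Finset.mul_sum]
    · intro s j
      refine Fin.cases ?_ ?_ j
      · calc ∑ i, (∑ jr, Smat s jr * r₁ jr i) * cols 0 i
            = ∑ jr, Smat s jr * ∑ i, r₁ jr i * cols 0 i := by
              simp only [Finset.sum_mul]
              rw [Finset.sum_comm]
              simp [Finset.mul_sum, mul_assoc]
          _ = 0 := by simp [hrx]
      · intro j'
        calc ∑ i, (∑ jr, Smat s jr * r₁ jr i) * cols j'.succ i
            = ∑ jr, Smat s jr * ∑ i, r₁ jr i * cols j'.succ i := by
              simp only [Finset.sum_mul]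
              rw [Finset.sum_comm]
              simp [Finset.mul_sum, mul_assoc]
          _ = ∑ jr, Smat s jr * cols' j' jr := rfl
          _ = 0 := hScols' s j'

section HomSpan
variable {k A : Type*} [Field k] [Ring A] [Algebra k A]
  (𝒜 : ℕ → Submodule k A) [GradedAlgebra 𝒜]

lemma hom_span {F : Subalgebra k A}
    (hgr : Subalgebra.toSubmodule F = ⨆ i, 𝒜 i ⊓ Subalgebra.toSubmodule F)
    [hFD : FiniteDimensional k ↥(Subalgebra.toSubmodule F)]
    {p q : ℕ} (T : Fin p → Fin q → A) (dp : Fin p → ℤ) (dq : Fin q → ℤ)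
    (hTB : ∀ r i, T r i ∈ F)
    (hThom : ∀ r i, T r i ∈
      (if 0 ≤ dp r - dq i then 𝒜 (dp r - dq i).toNat else (⊥ : Submodule k A))) :
    ∃ (m : ℕ) (U : Fin m → Fin q → A) (t : Fin m → ℤ),
      (∀ j i, U j i ∈ F) ∧
      (∀ j r, ∑ i, T r i * U j i = 0) ∧
      (∀ j i, U j i ∈
        (if 0 ≤ dq i + t j then 𝒜 (dq i + t j).toNat else (⊥ : Submodule k A))) ∧
      (∀ u : Fin q → A, (∀ i, u i ∈ F) → (∀ r, ∑ i, T r i * u i = 0) →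
        u ∈ Submodule.span k (Set.range U)) := by
  classical
  set B := Subalgebra.toSubmodule F with hB
  -- the solution space V
  set V : Submodule k (Fin q → A) :=
    { carrier := {u | (∀ i, u i ∈ F) ∧ ∀ r, ∑ i, T r i * u i = 0}
      add_mem' := by
        rintro u v ⟨hu1, hu2⟩ ⟨hv1, hv2⟩
        refine ⟨fun i => F.add_mem (hu1 i) (hv1 i), fun r => ?_⟩
        simp only [Pi.add_apply, mul_add, Finset.sum_add_distrib]
        rw [hu2 r, hv2 r, add_zero]
      zero_mem' := by
        refine ⟨fun i => F.zero_mem, fun r => ?_⟩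
        simp
      smul_mem' := by
        rintro c u ⟨hu1, hu2⟩
        refine ⟨fun i => Submodule.smul_mem (Subalgebra.toSubmodule F) c (hu1 i), fun r => ?_⟩
        simp only [Pi.smul_apply, mul_smul_comm, ← Finset.smul_sum]
        rw [hu2 r, smul_zero] } with hV
  have hVmem : ∀ u : Fin q → A,
      u ∈ V ↔ (∀ i, u i ∈ F) ∧ ∀ r, ∑ i, T r i * u i = 0 := fun u => Iff.rfl
  -- V is finite dimensional
  set BtoA : (Fin q → ↥B) →ₗ[k] (Fin q → A) :=
    LinearMap.pi (fun i => B.subtype ∘ₗ LinearMap.proj i) with hBtoA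
  have hVW : V ≤ LinearMap.range BtoA := by
    rintro u hu
    exact ⟨fun i => ⟨u i, ((hVmem u).mp hu).1 i⟩, rfl⟩
  haveI : FiniteDimensional k ↥(LinearMap.range BtoA) :=
    LinearMap.finiteDimensional_range BtoA
  haveI : FiniteDimensional k ↥V := Submodule.finiteDimensional_of_le hVW
  -- a finite generating family of V
  obtain ⟨nn, f, hf⟩ := Module.Finite.exists_fin (R := k) (M := ↥V)
  set v : Fin nn → (Fin q → A) := fun j => ((f j : ↥V) : Fin q → A) with hv
  have hvV : ∀ j, v j ∈ V := fun j => (f j).2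
  have hspanv : ∀ u ∈ V, u ∈ Submodule.span k (Set.range v) := by
    intro u hu
    have : Submodule.map V.subtype (Submodule.span k (Set.range f)) =
        Submodule.span k (Set.range v) := by
      rw [Submodule.map_span]
      congr 1
      rw [← Set.range_comp]
      rfl
    have h2 : Submodule.map V.subtype (Submodule.span k (Set.range f)) = V := by
      rw [hf, Submodule.map_top, Submodule.range_subtype]
    rw [← this, h2]
    exact hu
  -- the relevant finite set of degrees
  set Ts : Finset ℤ := Finset.univ.biUnion (fun j : Fin nn =>
    Finset.univ.biUnion (fun i : Fin q =>
      ((DirectSum.decompose 𝒜 (v j i)).support).image (fun s : ℕ => (s : ℤ) - dq i))) with hTs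
  have hTsmem : ∀ j i s, s ∈ (DirectSum.decompose 𝒜 (v j i)).support →
      (s : ℤ) - dq i ∈ Ts := by
    intro j i s hs
    apply Finset.mem_biUnion.mpr
    refine ⟨j, Finset.mem_univ j, ?_⟩
    apply Finset.mem_biUnion.mpr
    refine ⟨i, Finset.mem_univ i, ?_⟩
    exact Finset.mem_image_of_mem (fun s : ℕ => (s : ℤ) - dq i) hs
  -- homogeneous components of vectors
  set comp : ℤ → (Fin q → A) → (Fin q → A) :=
    fun t u i => if 0 ≤ dq i + t then projA 𝒜 (dq i + t).toNat (u i) else 0 with hcomp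
  have key : ∀ (t : ℤ) (u : Fin q → A) (r : Fin p) (i : Fin q),
      T r i * comp t u i =
        if 0 ≤ dp r + t then projA 𝒜 (dp r + t).toNat (T r i * u i) else 0 := by
    intro t u r i
    by_cases hT : 0 ≤ dp r - dq i
    · have hTmem : T r i ∈ 𝒜 (dp r - dq i).toNat := by
        have := hThom r i
        rwa [if_pos hT] at this
      by_cases hq : 0 ≤ dq i + t
      · have hp : 0 ≤ dp r + t := by omega
        rw [if_pos hp]
        simp only [hcomp]
        rw [if_pos hq]
        rw [projA_hom_mul 𝒜 hTmem]
        rw [if_pos (by omega : (dp r - dq i).toNat ≤ (dp r + t).toNat)]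
        have heq : (dp r + t).toNat - (dp r - dq i).toNat = (dq i + t).toNat := by omega
        rw [heq]
      · simp only [hcomp]
        rw [if_neg hq, mul_zero]
        by_cases hp : 0 ≤ dp r + t
        · rw [if_pos hp, projA_hom_mul 𝒜 hTmem, if_neg (by omega)]
        · rw [if_neg hp]
    · have hT0 : T r i = 0 := by
        have := hThom r i
        rwa [if_neg hT, Submodule.mem_bot] at this
      simp [hT0]
  have hcompV : ∀ (t : ℤ) (u : Fin q → A), u ∈ V → comp t u ∈ V := by
    intro t u hu
    rw [hVmem] at hu ⊢
    constructor
    · intro i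
      simp only [hcomp]
      split
      · exact projA_mem_subalgebra 𝒜 hgr (hu.1 i) _
      · exact F.zero_mem
    · intro r
      have : ∑ i, T r i * comp t u i =
          if 0 ≤ dp r + t then projA 𝒜 (dp r + t).toNat (∑ i, T r i * u i) else 0 := by
        rw [Finset.sum_congr rfl (fun i _ => key t u r i)]
        split
        · rw [map_sum]
        · simp
      rw [this, hu.2 r]
      split <;> simp
  have hcomphom : ∀ (t : ℤ) (u : Fin q → A) (i : Fin q),
      comp t u i ∈ (if 0 ≤ dq i + t then 𝒜 (dq i + t).toNat else (⊥ : Submodule k A)) := by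
    intro t u i
    simp only [hcomp]
    split
    · exact projA_mem 𝒜 _ _
    · exact Submodule.zero_mem ⊥
  -- decomposition of the generators
  have hdec1 : ∀ (a : A) (e : ℤ), (∀ s ∈ (DirectSum.decompose 𝒜 a).support, (s : ℤ) - e ∈ Ts) →
      ∑ t ∈ Ts, (if 0 ≤ e + t then projA 𝒜 (e + t).toNat a else 0) = a := by
    intro a e h
    rw [← Finset.sum_filter]
    have hinj : ∀ t1 ∈ Ts.filter (fun t => 0 ≤ e + t), ∀ t2 ∈ Ts.filter (fun t => 0 ≤ e + t),
        (e + t1).toNat = (e + t2).toNat → t1 = t2 := by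
      intro t1 h1 t2 h2 hEq
      rw [Finset.mem_filter] at h1 h2
      omega
    have himg : ∑ t ∈ Ts.filter (fun t => 0 ≤ e + t), projA 𝒜 (e + t).toNat a
        = ∑ s ∈ (Ts.filter (fun t => 0 ≤ e + t)).image (fun t => (e + t).toNat),
            projA 𝒜 s a := (Finset.sum_image (f := fun s => (projA 𝒜 s) a) hinj).symm
    rw [himg]
    have hsub : (DirectSum.decompose 𝒜 a).support ⊆
        (Ts.filter (fun t => 0 ≤ e + t)).image (fun t => (e + t).toNat) := by
      intro s hs
      rw [Finset.mem_image]
      refine ⟨(s : ℤ) - e, ?_, by omega⟩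
      rw [Finset.mem_filter]
      exact ⟨h s hs, by omega⟩
    rw [← Finset.sum_subset hsub ?_]
    · exact DirectSum.sum_support_decompose 𝒜 a
    · intro s _ hns
      rw [DFinsupp.notMem_support_iff] at hns
      simp [hns]
  have hdec : ∀ j, v j = ∑ t ∈ Ts, comp t (v j) := by
    intro j
    funext i
    have : (∑ t ∈ Ts, comp t (v j)) i = ∑ t ∈ Ts, comp t (v j) i := by
      simp [Finset.sum_apply]
    rw [this]
    exact (hdec1 (v j i) (dq i) (fun s hs => hTsmem j i s hs)).symm
  -- assemble the finite homogeneous family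
  set γ := Fin nn × {t // t ∈ Ts} with hγ
  set eqv : γ ≃ Fin (Fintype.card γ) := Fintype.equivFin γ with heqv
  refine ⟨Fintype.card γ, fun j => comp ((eqv.symm j).2 : ℤ) (v (eqv.symm j).1),
    fun j => ((eqv.symm j).2 : ℤ), ?_, ?_, ?_, ?_⟩
  · intro j i
    exact ((hVmem _).mp (hcompV _ _ (hvV _))).1 i
  · intro j r
    exact ((hVmem _).mp (hcompV _ _ (hvV _))).2 r
  · intro j i
    exact hcomphom _ _ i
  · intro u hu1 hu2
    have huV : u ∈ V := (hVmem u).mpr ⟨hu1, hu2⟩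
    have h1 := hspanv u huV
    have hle : Submodule.span k (Set.range v) ≤
        Submodule.span k (Set.range fun j =>
          comp ((eqv.symm j).2 : ℤ) (v (eqv.symm j).1)) := by
      apply Submodule.span_le.mpr
      rintro x ⟨j, rfl⟩
      rw [hdec j]
      apply Submodule.sum_mem
      intro t ht
      apply Submodule.subset_span
      exact ⟨eqv (j, ⟨t, ht⟩), by simp⟩
    exact hle h1

end HomSpan

end Aux

/-- Let `A` be a P-algebra over a field `k` which is flat as a right module over `A(n)`
(expressed by the equational criterion for flatness), let `M'` be a finitely generated
graded `A(n)`-module and let `M = A ⊗_{A(n)} M'`.  Then there is an injective `A`-module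
homomorphism from `M` into a finitely generated free `A`-module whose cokernel is again of
the form `A ⊗_{A(n)} Q'` for a finitely generated graded `A(n)`-module `Q'`. -/
theorem statement8 {k A : Type*} [Field k] [Ring A] [Algebra k A]
    (𝒜 : ℕ → Submodule k A) [GradedAlgebra 𝒜]
    (Fam : ℕ → Subalgebra k A) (pd : ℕ → ℕ)
    (hPA : IsPAlgebra k 𝒜 Fam pd) (n : ℕ)
    -- `A` is flat as a right `A(n)`-module: the equational criterion for flatness
    (hflat : ∀ (m : ℕ) (x : Fin m → A), (∀ i, x i ∈ Fam n) → ∀ a : Fin m → A,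
      ∑ i, a i * x i = 0 →
      ∃ (p : ℕ) (c : Fin p → A) (r : Fin p → Fin m → A),
        (∀ j i, r j i ∈ Fam n) ∧ (∀ i, a i = ∑ j, c j * r j i) ∧
        (∀ j, ∑ i, r j i * x i = 0))
    -- `M = A ⊗_{A(n)} M'` for a finitely generated graded `A(n)`-module `M'`
    {M : Type*} [AddCommGroup M] [Module A M]
    (hM : IsInducedFrom 𝒜 (Fam n) M) :
    ∃ (m : ℕ) (φ : M →ₗ[A] (Fin m → A)),
      Function.Injective φ ∧
      IsInducedFrom 𝒜 (Fam n) ((Fin m → A) ⧸ LinearMap.range φ) := by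
  classical
  obtain ⟨p, q, T, dp, dq, hTB, hThom, ⟨e⟩⟩ := hM
  set d := pd n with hd
  haveI hFD : FiniteDimensional k ↥(Subalgebra.toSubmodule (Fam n)) := hPA.finiteDimensional n
  obtain ⟨lam, hl1, hl2⟩ := lam_exists 𝒜 d (Subalgebra.toSubmodule (Fam n)) (hPA.top_rank n)
  have hgr := hPA.graded_subalgebra n
  have hbot : ∀ j, d < j → 𝒜 j ⊓ Subalgebra.toSubmodule (Fam n) = ⊥ :=
    fun j hj => hPA.eq_bot_of_gt n j hj
  have hdual : ∀ j, j ≤ d → ∀ x ∈ 𝒜 j ⊓ Subalgebra.toSubmodule (Fam n), x ≠ 0 →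
      ∃ z ∈ 𝒜 (d - j) ⊓ Subalgebra.toSubmodule (Fam n), z * x ≠ 0 :=
    fun j hj => hPA.duality n j hj
  obtain ⟨m, U, t, hUB, hUrel, hUhom, hUspan⟩ := hom_span 𝒜 hgr T dp dq hTB hThom
  set Umat : Fin q → Fin m → A := fun i j => U j i with hUmat
  set ψ : (Fin q → A) →ₗ[A] (Fin m → A) := rightMulMatrix Umat with hψ
  have hψ_apply : ∀ (x : Fin q → A) (j : Fin m), ψ x j = ∑ i, x i * U j i := fun x j => rfl
  -- the image of `T` is contained in the kernel of `ψ`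
  have hTU : LinearMap.range (rightMulMatrix T) ≤ LinearMap.ker ψ := by
    rintro x ⟨c, rfl⟩
    rw [LinearMap.mem_ker]
    funext j
    have : ψ (rightMulMatrix T c) j = ∑ i, (∑ r, c r * T r i) * U j i := rfl
    rw [this]
    calc ∑ i, (∑ r, c r * T r i) * U j i
        = ∑ r, c r * ∑ i, T r i * U j i := by
          simp only [Finset.sum_mul]
          rw [Finset.sum_comm]
          simp [Finset.mul_sum, mul_assoc]
      _ = 0 := by
          simp only [hUrel j, mul_zero, Finset.sum_const_zero]
  -- the kernel of `ψ` is contained in the image of `T`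
  have hker : LinearMap.ker ψ ≤ LinearMap.range (rightMulMatrix T) := by
    intro x hx
    rw [LinearMap.mem_ker] at hx
    have hx' : ∀ j, ∑ i, x i * U j i = 0 := by
      intro j
      have := congrFun hx j
      rw [← hψ_apply x j]
      rw [this]
      rfl
    obtain ⟨P, cc, rr, hrrB, hxc, hrrU⟩ :=
      flat_matrix (Fam n) hflat m q (fun j => U j) hUB x hx'
    have hann : ∀ s (u : Fin q → A), (∀ i, u i ∈ Fam n) →
        (∀ r, ∑ i, T r i * u i = 0) → ∑ i, rr s i * u i = 0 := by
      intro s u hu1 hu2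
      have huspan := hUspan u hu1 hu2
      set g : (Fin q → A) →ₗ[k] A :=
        { toFun := fun u => ∑ i, rr s i * u i
          map_add' := by
            intro u v
            simp only [Pi.add_apply, mul_add, Finset.sum_add_distrib]
          map_smul' := by
            intro c u
            simp only [Pi.smul_apply, mul_smul_comm, ← Finset.smul_sum, RingHom.id_apply] }
        with hg
      have hgU : Submodule.span k (Set.range U) ≤ LinearMap.ker g := by
        apply Submodule.span_le.mpr
        rintro _ ⟨j, rfl⟩
        rw [SetLike.mem_coe, LinearMap.mem_ker]
        exact hrrU s j
      have := hgU huspan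
      rw [LinearMap.mem_ker] at this
      exact this
    have hsel : ∀ s, ∃ b : Fin p → A, (∀ r, b r ∈ Fam n) ∧
        ∀ i, rr s i = ∑ r, b r * T r i := by
      intro s
      exact dual_ann (F := Fam n) (d := d) 𝒜 lam hl1 hl2 hdual hgr hbot T hTB
        (rr s) (hrrB s) (hann s)
    choose b hbF hbeq using hsel
    refine ⟨fun r => ∑ s, cc s * b s r, ?_⟩
    funext i
    have : rightMulMatrix T (fun r => ∑ s, cc s * b s r) i
        = ∑ r, (∑ s, cc s * b s r) * T r i := rfl
    rw [this]
    calc ∑ r, (∑ s, cc s * b s r) * T r i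
        = ∑ s, cc s * ∑ r, b s r * T r i := by
          simp only [Finset.sum_mul]
          rw [Finset.sum_comm]
          simp [Finset.mul_sum, mul_assoc]
      _ = ∑ s, cc s * rr s i := by
          refine Finset.sum_congr rfl fun s _ => by rw [← hbeq s i]
      _ = x i := (hxc i).symm
  have hkereq : LinearMap.ker ψ = LinearMap.range (rightMulMatrix T) :=
    le_antisymm hker hTU
  -- construct the embedding
  set ψbar : ((Fin q → A) ⧸ LinearMap.range (rightMulMatrix T)) →ₗ[A] (Fin m → A) :=
    Submodule.liftQ (LinearMap.range (rightMulMatrix T)) ψ hTU with hψbar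
  have hψbar_inj : Function.Injective ψbar := by
    rw [← LinearMap.ker_eq_bot]
    exact Submodule.ker_liftQ_eq_bot _ _ _ (le_of_eq hkereq)
  refine ⟨m, ψbar.comp e.toLinearMap, ?_, ?_⟩
  · rw [LinearMap.coe_comp]
    exact hψbar_inj.comp e.injective
  · have hrange : LinearMap.range (ψbar.comp e.toLinearMap) =
        LinearMap.range (rightMulMatrix Umat) := by
      rw [LinearMap.range_comp]
      have h1 : LinearMap.range e.toLinearMap = ⊤ := LinearEquiv.range e
      rw [h1, Submodule.map_top, Submodule.range_liftQ]
    refine ⟨q, m, Umat, dq, fun j => -(t j), ?_, ?_, ?_⟩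
    · intro i j
      exact hUB j i
    · intro i j
      have h1 : dq i - -(t j) = dq i + t j := by ring
      rw [h1]
      exact hUhom j i
    · exact ⟨Submodule.quotEquivOfEq _ _ (by rw [hrange])⟩
end

section
/- Let A be a P-algebra over a field k that is flat as a right A(n)-module for every n, and assume that every finitely generated free A-module is injective as an A-module (which holds for P-algebras by Margolis, Theorem 13.12). Then every coherent A-module M admits an injective resolution 0 → M → J^0 → J^1 → ⋯ in which each J^s is a finitely generated free A-module. -/
section Auxiliary

open Module

set_option synthInstance.maxHeartbeats 1000000
set_option maxHeartbeats 2000000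

theorem sum_swap_mul' {A : Type*} [Ring A] {p a : ℕ} (c : Fin p → A)
    (r : Fin p → Fin a → A) (u : Fin a → A) :
    ∑ l, c l * (∑ i, r l i * u i) = ∑ i, (∑ l, c l * r l i) * u i := by
  simp_rw [Finset.mul_sum, Finset.sum_mul, mul_assoc]
  exact Finset.sum_comm

theorem rightMulMatrix_apply' {A : Type*} [Ring A] {p q : ℕ} (T : Fin p → Fin q → A)
    (v : Fin p → A) (j : Fin q) : rightMulMatrix T v j = ∑ i, v i * T i j := rfl

theorem flat_sys' {k A : Type*} [Field k] [Ring A] [Algebra k A] (S : Subalgebra k A)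
    (hflat : ∀ (m : ℕ) (x : Fin m → A), (∀ i, x i ∈ S) → ∀ a : Fin m → A,
      ∑ i, a i * x i = 0 →
      ∃ (p : ℕ) (c : Fin p → A) (r : Fin p → Fin m → A),
        (∀ j i, r j i ∈ S) ∧ (∀ i, a i = ∑ j, c j * r j i) ∧
        (∀ j, ∑ i, r j i * x i = 0)) :
    ∀ (b a : ℕ) (U : Fin a → Fin b → A), (∀ i j, U i j ∈ S) →
    ∀ w : Fin a → A, (∀ j, ∑ i, w i * U i j = 0) →
    ∃ (p : ℕ) (c : Fin p → A) (R : Fin p → Fin a → A),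
      (∀ l i, R l i ∈ S) ∧ (∀ i, w i = ∑ l, c l * R l i) ∧
      (∀ l j, ∑ i, R l i * U i j = 0) := by
  intro b
  induction b with
  | zero =>
    intro a U _ w _
    refine ⟨a, w, fun l i => if l = i then 1 else 0, fun l i => ?_, fun i => ?_, fun l j => ?_⟩
    · dsimp only; split
      · exact S.one_mem
      · exact S.zero_mem
    · simp [mul_ite, Finset.sum_ite_eq]
    · exact absurd j.2 (Nat.not_lt_zero _)
  | succ b ih =>
    intro a U hU w hw
    obtain ⟨p, c, r, hrS, hwc, hr0⟩ :=
      hflat a (fun i => U i 0) (fun i => hU i 0) w (hw 0)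
    set Y : Fin p → Fin b → A := fun l j => ∑ i, r l i * U i j.succ with hY
    have hYS : ∀ l j, Y l j ∈ S := fun l j =>
      sum_mem (fun i _ => S.mul_mem (hrS l i) (hU i j.succ))
    have hcY : ∀ j, ∑ l, c l * Y l j = 0 := by
      intro j
      have h2 : ∑ l, c l * Y l j = ∑ i, (∑ l, c l * r l i) * U i j.succ :=
        sum_swap_mul' c r (fun i => U i j.succ)
      rw [h2]
      calc ∑ i, (∑ l, c l * r l i) * U i j.succ
          = ∑ i, w i * U i j.succ :=
            Finset.sum_congr rfl fun i _ => by rw [← hwc i]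
        _ = 0 := hw j.succ
    obtain ⟨p', c', R', hR'S, hcc', hR'Y⟩ := ih p Y hYS c hcY
    refine ⟨p', c', fun m i => ∑ l, R' m l * r l i, fun m i => ?_, fun i => ?_, fun m j => ?_⟩
    · exact sum_mem (fun l _ => S.mul_mem (hR'S m l) (hrS l i))
    · show w i = ∑ l, c' l * ∑ l', R' l l' * r l' i
      rw [hwc i, sum_swap_mul' c' (fun m l => R' m l) (fun l => r l i)]
      exact Finset.sum_congr rfl fun l _ => by rw [hcc' l]
    · have key : ∑ i, (∑ l, R' m l * r l i) * U i j = ∑ l, R' m l * ∑ i, r l i * U i j :=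
        (sum_swap_mul' (fun l => R' m l) r (fun i => U i j)).symm
      rw [key]
      rcases Fin.eq_zero_or_eq_succ j with hj | ⟨j', hj⟩
      · subst hj
        simp [hr0]
      · subst hj
        have h3 : ∀ l, ∑ i, r l i * U i j'.succ = Y l j' := fun l => rfl
        simp_rw [h3]
        exact hR'Y m j'

theorem ker_range_transfer' {k A : Type*} [Field k] [Ring A] [Algebra k A]
    (S : Subalgebra k A)
    (hsys : ∀ (b a : ℕ) (U : Fin a → Fin b → A), (∀ i j, U i j ∈ S) →
      ∀ w : Fin a → A, (∀ j, ∑ i, w i * U i j = 0) →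
      ∃ (p : ℕ) (c : Fin p → A) (R : Fin p → Fin a → A),
        (∀ l i, R l i ∈ S) ∧ (∀ i, w i = ∑ l, c l * R l i) ∧
        (∀ l j, ∑ i, R l i * U i j = 0))
    {a b c : ℕ} (V : Fin a → Fin b → ↥S) (U : Fin b → Fin c → ↥S)
    (hex : LinearMap.ker (rightMulMatrix U) = LinearMap.range (rightMulMatrix V)) :
    LinearMap.ker (rightMulMatrix (fun i j => (U i j : A)))
      = LinearMap.range (rightMulMatrix (fun i j => (V i j : A))) := by
  have hrowmem : ∀ i : Fin a, (fun j => V i j) ∈ LinearMap.range (rightMulMatrix V) := by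
    intro i
    refine ⟨Pi.single i 1, ?_⟩
    funext j
    rw [rightMulMatrix_apply']
    simp [Pi.single_apply, ite_mul]
  have hrow : ∀ (i : Fin a) (jc : Fin c), ∑ j, (V i j : A) * (U j jc : A) = 0 := by
    intro i jc
    have h1 : (fun j => V i j) ∈ LinearMap.ker (rightMulMatrix U) := by
      rw [hex]; exact hrowmem i
    have h2 : ∑ j, V i j * U j jc = 0 := by
      have := LinearMap.mem_ker.mp h1
      calc ∑ j, V i j * U j jc = rightMulMatrix U (fun j => V i j) jc := rfl
        _ = 0 := by rw [this]; rfl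
    calc ∑ j, (V i j : A) * (U j jc : A) = ((∑ j, V i j * U j jc : ↥S) : A) := by
          push_cast; rfl
      _ = 0 := by rw [h2]; rfl
  ext w
  constructor
  · intro hw
    have hw' : ∀ jc, ∑ j, w j * (U j jc : A) = 0 := by
      intro jc
      have := LinearMap.mem_ker.mp hw
      calc ∑ j, w j * (U j jc : A) = rightMulMatrix (fun i j => (U i j : A)) w jc := rfl
        _ = 0 := by rw [this]; rfl
    obtain ⟨p, cc, R, hRS, hwR, hRU⟩ :=
      hsys c b (fun i j => (U i j : A)) (fun i j => (U i j).2) w hw'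
    have hρker : ∀ l, (fun i => (⟨R l i, hRS l i⟩ : ↥S)) ∈ LinearMap.ker (rightMulMatrix U) := by
      intro l
      rw [LinearMap.mem_ker]
      funext jc
      apply Subtype.ext
      show ((∑ i, (⟨R l i, hRS l i⟩ : ↥S) * U i jc : ↥S) : A) = ((0 : ↥S) : A)
      push_cast
      exact (hRU l jc).trans rfl
    have hρrange : ∀ l, ∃ σ : Fin a → ↥S,
        rightMulMatrix V σ = fun i => (⟨R l i, hRS l i⟩ : ↥S) := by
      intro l
      have := hρker l
      rw [hex] at this
      exact this
    choose σ hσ using hρrange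
    refine ⟨fun m => ∑ l, cc l * (σ l m : A), ?_⟩
    funext i
    rw [rightMulMatrix_apply']
    have swap := sum_swap_mul' cc (fun l m => (σ l m : A)) (fun m => (V m i : A))
    rw [← swap]
    have hinner : ∀ l, ∑ m, (σ l m : A) * (V m i : A) = R l i := by
      intro l
      have h3 : (rightMulMatrix V (σ l)) i = (⟨R l i, hRS l i⟩ : ↥S) := by rw [hσ l]
      have h4 : ∑ m, σ l m * V m i = (⟨R l i, hRS l i⟩ : ↥S) := h3
      calc ∑ m, (σ l m : A) * (V m i : A) = ((∑ m, σ l m * V m i : ↥S) : A) := by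
            push_cast; rfl
        _ = R l i := by rw [h4]
    simp_rw [hinner]
    exact (hwR i).symm
  · rintro ⟨u, rfl⟩
    rw [LinearMap.mem_ker]
    funext jc
    show ∑ j, (rightMulMatrix (fun i j => (V i j : A)) u) j * (U j jc : A) = 0
    have : ∀ j, (rightMulMatrix (fun i j => (V i j : A)) u) j = ∑ i, u i * (V i j : A) :=
      fun j => rfl
    simp_rw [this]
    rw [← sum_swap_mul' u (fun i j => (V i j : A)) (fun j => (U j jc : A))]
    calc ∑ i, u i * ∑ j, (V i j : A) * (U j jc : A) = ∑ i, u i * 0 :=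
          Finset.sum_congr rfl fun i _ => by rw [hrow i jc]
      _ = 0 := by simp

theorem mem_graded_piece' {k A : Type*} [Field k] [Ring A] [Algebra k A]
    (𝒜 : ℕ → Submodule k A) [GradedAlgebra 𝒜] (S : Subalgebra k A)
    (hgr : S.toSubmodule = ⨆ i, 𝒜 i ⊓ S.toSubmodule) :
    ∀ z ∈ S, ∀ i : ℕ, ((DirectSum.decompose 𝒜 z i : 𝒜 i) : A) ∈ S := by
  have hπ : ∀ i : ℕ, ∃ f : A →ₗ[k] A, ∀ a, f a = ((DirectSum.decompose 𝒜 a i : 𝒜 i) : A) := by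
    intro i
    exact ⟨((𝒜 i).subtype.comp ((DirectSum.component k ℕ (fun j => ↥(𝒜 j)) i).comp
      (DirectSum.decomposeLinearEquiv 𝒜).toLinearMap)), fun a => rfl⟩
  choose π hπ' using hπ
  have key : S.toSubmodule ≤ ⨅ i : ℕ, Submodule.comap (π i) S.toSubmodule := by
    refine le_trans (le_of_eq hgr) (iSup_le fun i => ?_)
    rintro x ⟨hxi, hxS⟩
    refine Submodule.mem_iInf _ |>.mpr fun j => ?_
    show π j x ∈ S.toSubmodule
    rw [hπ' j x]
    by_cases h : i = j
    · subst h
      rw [DirectSum.decompose_of_mem_same 𝒜 hxi]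
      exact hxS
    · rw [DirectSum.decompose_of_mem_ne 𝒜 hxi h]
      exact S.toSubmodule.zero_mem
  intro z hz i
  have := Submodule.mem_iInf _ |>.mp (key hz) i
  rw [← hπ' i z]
  exact this

theorem frobenius_dual_equiv' {k A : Type*} [Field k] [Ring A] [Algebra k A]
    (𝒜 : ℕ → Submodule k A) [GradedAlgebra 𝒜] (S : Subalgebra k A) (d : ℕ)
    (hgr : S.toSubmodule = ⨆ i, 𝒜 i ⊓ S.toSubmodule)
    (hfd : FiniteDimensional k ↥S)
    (hbot : ∀ j, d < j → 𝒜 j ⊓ S.toSubmodule = ⊥)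
    (htop : Module.finrank k ↥(𝒜 d ⊓ S.toSubmodule) = 1)
    (hdual : ∀ j, j ≤ d → ∀ x ∈ 𝒜 j ⊓ S.toSubmodule, x ≠ 0 →
      ∃ z ∈ 𝒜 (d - j) ⊓ S.toSubmodule, z * x ≠ 0) :
    ∃ Φ : ↥S ≃ₗ[k] Module.Dual k ↥S, ∀ z x v : ↥S, Φ (v * z) x = Φ z (x * v) := by
  classical
  haveI := hfd
  set W : Submodule k A := 𝒜 d ⊓ S.toSubmodule with hW
  haveI hWfd : FiniteDimensional k W := FiniteDimensional.of_finrank_eq_succ (n := 0) htop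
  let B : Basis (Fin 1) k W := Module.finBasisOfFinrankEq k W htop
  let ℓ : W →ₗ[k] k := (LinearMap.proj 0) ∘ₗ B.equivFun.toLinearMap
  have hℓ : ∀ w : W, ℓ w = 0 → w = 0 := by
    intro w hw
    have h1 : B.equivFun w = 0 := by
      funext i
      have : i = 0 := Subsingleton.elim i 0
      subst this
      exact hw
    have := congrArg B.equivFun.symm h1
    rwa [B.equivFun.symm_apply_apply, map_zero] at this
  let πlin : A →ₗ[k] A := (𝒜 d).subtype ∘ₗ (DirectSum.component k ℕ (fun j => ↥(𝒜 j)) d) ∘ₗ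
    (DirectSum.decomposeLinearEquiv 𝒜).toLinearMap
  have hπ : ∀ a : A, πlin a = ((DirectSum.decompose 𝒜 a d : 𝒜 d) : A) := fun _ => rfl
  let μ0 : ↥S →ₗ[k] A := πlin ∘ₗ S.val.toLinearMap
  have hμ0mem : ∀ s : ↥S, μ0 s ∈ W :=
    fun s => ⟨SetLike.coe_mem _, mem_graded_piece' 𝒜 S hgr _ s.2 d⟩
  let μ : ↥S →ₗ[k] W := μ0.codRestrict W hμ0mem
  let lam : ↥S →ₗ[k] k := ℓ ∘ₗ μ
  have hlam : ∀ s : ↥S, lam s = ℓ ⟨((DirectSum.decompose 𝒜 (s : A) d : 𝒜 d) : A), hμ0mem s⟩ :=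
    fun s => rfl
  let Φ0 : ↥S →ₗ[k] Module.Dual k ↥S := LinearMap.mk₂ k (fun z x => lam (x * z))
    (fun z z' x => by show lam (x * (z + z')) = lam (x * z) + lam (x * z'); rw [mul_add, map_add])
    (fun c z x => by show lam (x * (c • z)) = c • lam (x * z); rw [mul_smul_comm, map_smul])
    (fun z x x' => by show lam ((x + x') * z) = lam (x * z) + lam (x' * z); rw [add_mul, map_add])
    (fun c z x => by show lam ((c • x) * z) = c • lam (x * z); rw [smul_mul_assoc, map_smul])
  have hΦ0 : ∀ z x : ↥S, Φ0 z x = lam (x * z) := fun z x => rfl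
  have hnd : ∀ z : ↥S, z ≠ 0 → ∃ x : ↥S, lam (x * z) ≠ 0 := by
    intro z hz
    set zA : A := (z : A) with hzA
    set P : ℕ → Prop := fun i => ((DirectSum.decompose 𝒜 zA i : 𝒜 i) : A) ≠ 0 with hP
    have hbig : ∀ i, d < i → ((DirectSum.decompose 𝒜 zA i : 𝒜 i) : A) = 0 := by
      intro i hi
      have hm : ((DirectSum.decompose 𝒜 zA i : 𝒜 i) : A) ∈ 𝒜 i ⊓ S.toSubmodule :=
        ⟨SetLike.coe_mem _, mem_graded_piece' 𝒜 S hgr _ z.2 i⟩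
      rw [hbot i hi] at hm
      exact hm
    have hex : ∃ i, i ≤ d ∧ P i := by
      by_contra h
      push_neg at h
      have hall : ∀ i, ((DirectSum.decompose 𝒜 zA i : 𝒜 i) : A) = 0 := by
        intro i
        rcases le_or_gt i d with hi | hi
        · by_contra hne
          exact (h i hi) hne
        · exact hbig i hi
      have h0 : DirectSum.decomposeLinearEquiv 𝒜 zA = 0 := by
        rw [DirectSum.decomposeLinearEquiv_apply]
        apply DFinsupp.ext
        intro i
        exact Subtype.ext (hall i)
      have : zA = 0 := (DirectSum.decomposeLinearEquiv 𝒜).map_eq_zero_iff.mp h0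
      exact hz (Subtype.ext this)
    obtain ⟨i0, hi0d, hi0⟩ := hex
    set j : ℕ := Nat.findGreatest P d with hj
    have hPj : P j := Nat.findGreatest_spec hi0d hi0
    have hjd : j ≤ d := Nat.findGreatest_le d
    have hmax : ∀ i, j < i → ((DirectSum.decompose 𝒜 zA i : 𝒜 i) : A) = 0 := by
      intro i hji
      rcases le_or_gt i d with hi | hi
      · by_contra hne
        exact absurd (Nat.le_findGreatest hi hne) (not_le.mpr hji)
      · exact hbig i hi
    set zj : A := ((DirectSum.decompose 𝒜 zA j : 𝒜 j) : A) with hzj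
    have hzjmem : zj ∈ 𝒜 j ⊓ S.toSubmodule :=
      ⟨SetLike.coe_mem _, mem_graded_piece' 𝒜 S hgr _ z.2 j⟩
    obtain ⟨x, ⟨hxd, hxS⟩, hxzj⟩ := hdual j hjd zj hzjmem hPj
    have hxzjW : x * zj ∈ W := by
      constructor
      · have := SetLike.mul_mem_graded hxd hzjmem.1
        rwa [Nat.sub_add_cancel hjd] at this
      · exact S.mul_mem hxS hzjmem.2
    have hproj : ((DirectSum.decompose 𝒜 (x * zA) d : 𝒜 d) : A) = x * zj := by
      have hsupp : ∑ i ∈ (DirectSum.decompose 𝒜 zA).support,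
          ((DirectSum.decompose 𝒜 zA i : 𝒜 i) : A) = zA :=
        DirectSum.sum_support_decompose 𝒜 zA
      have hxz : x * zA = ∑ i ∈ (DirectSum.decompose 𝒜 zA).support,
          x * ((DirectSum.decompose 𝒜 zA i : 𝒜 i) : A) := by
        rw [← Finset.mul_sum, hsupp]
      have hjsupp : j ∈ (DirectSum.decompose 𝒜 zA).support := by
        rw [DFinsupp.mem_support_iff]
        intro hcon
        apply hPj
        rw [hcon]
        rfl
      rw [← hπ, hxz, map_sum]
      rw [Finset.sum_eq_single j]
      · rw [hπ]
        exact DirectSum.decompose_of_mem_same 𝒜 (by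
          have := SetLike.mul_mem_graded hxd hzjmem.1
          rwa [Nat.sub_add_cancel hjd] at this)
      · intro i _ hij
        rcases lt_or_gt_of_ne hij with hlt | hgt
        · rw [hπ]
          refine DirectSum.decompose_of_mem_ne 𝒜
            (SetLike.mul_mem_graded hxd (SetLike.coe_mem _)) ?_
          intro hcon
          omega
        · rw [hmax i hgt, mul_zero, map_zero]
      · intro hcon
        exact absurd hjsupp hcon
    refine ⟨⟨x, hxS⟩, ?_⟩
    intro h0
    apply hxzj
    have hμval : μ (⟨x, hxS⟩ * z) = ⟨x * zj, hxzjW⟩ := by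
      apply Subtype.ext
      show μ0 (⟨x, hxS⟩ * z) = x * zj
      show πlin ((⟨x, hxS⟩ * z : ↥S) : A) = x * zj
      have : ((⟨x, hxS⟩ * z : ↥S) : A) = x * zA := rfl
      rw [this, hπ, hproj]
    have h1 : ℓ ⟨x * zj, hxzjW⟩ = 0 := by
      rw [← hμval]
      exact h0
    have := hℓ _ h1
    exact congrArg Subtype.val this
  have hinj : Function.Injective Φ0 := by
    rw [injective_iff_map_eq_zero]
    intro z hz0
    by_contra hzne
    obtain ⟨x, hx⟩ := hnd z hzne
    apply hx
    rw [← hΦ0 z x, hz0]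
    rfl
  let Φ : ↥S ≃ₗ[k] Module.Dual k ↥S :=
    Φ0.linearEquivOfInjective hinj (Subspace.dual_finrank_eq).symm
  refine ⟨Φ, fun z x v => ?_⟩
  have hΦ : ∀ w : ↥S, Φ w = Φ0 w := fun w =>
    LinearMap.linearEquivOfInjective_apply hinj (Subspace.dual_finrank_eq).symm w
  rw [hΦ, hΦ, hΦ0, hΦ0, mul_assoc]

theorem exists_copresentation' {k A : Type*} [Field k] [Ring A] [Algebra k A]
    (S : Subalgebra k A) (hfd : FiniteDimensional k ↥S)
    (Φ : ↥S ≃ₗ[k] Module.Dual k ↥S)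
    (hΦ : ∀ z x v : ↥S, Φ (v * z) x = Φ z (x * v))
    (b : ℕ) (K : Submodule ↥S (Fin b → ↥S)) :
    ∃ (r : ℕ) (V : Fin b → Fin r → ↥S), LinearMap.ker (rightMulMatrix V) = K := by
  classical
  haveI := hfd
  set N := (Fin b → ↥S) ⧸ K with hN
  haveI : Module.Finite k N :=
    Module.Finite.of_surjective ((K.mkQ).restrictScalars k)
      (Submodule.mkQ_surjective K)
  set m := finrank k N with hm
  let β : Basis (Fin m) k N := Module.finBasis k N
  let f : N → Fin m → (↥S →ₗ[k] k) := fun n j =>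
    { toFun := fun x => β.equivFun (x • n) j
      map_add' := fun x y => by
        show β.equivFun ((x + y) • n) j = β.equivFun (x • n) j + β.equivFun (y • n) j
        rw [add_smul, map_add]
        rfl
      map_smul' := fun c x => by
        show β.equivFun ((c • x) • n) j = c • β.equivFun (x • n) j
        rw [smul_assoc, map_smul]
        rfl }
  let V : Fin b → Fin m → ↥S :=
    fun i j => Φ.symm (f (K.mkQ ((Pi.single i (1 : ↥S)) : Fin b → ↥S)) j)
  have hsingle : ∀ (v : Fin b → ↥S), ∑ i, v i • ((Pi.single i (1 : ↥S)) : Fin b → ↥S) = v := by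
    intro v
    have h1 : ∀ i : Fin b, v i • ((Pi.single i (1 : ↥S)) : Fin b → ↥S) = Pi.single i (v i) := by
      intro i
      funext t
      simp [Pi.single_apply, mul_ite]
    simp_rw [h1]
    exact Finset.univ_sum_single v
  have hkey : ∀ (v : Fin b → ↥S) (j : Fin m) (x : ↥S),
      Φ (∑ i, v i * V i j) x = β.equivFun (x • K.mkQ v) j := by
    intro v j x
    rw [map_sum]
    rw [LinearMap.sum_apply]
    have h1 : ∀ i, Φ (v i * V i j) x
        = β.equivFun ((x * v i) • K.mkQ ((Pi.single i (1 : ↥S)) : Fin b → ↥S)) j := by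
      intro i
      rw [hΦ, Φ.apply_symm_apply]
      rfl
    simp_rw [h1]
    have h2 : ∀ i, ((x * v i) • K.mkQ ((Pi.single i (1 : ↥S)) : Fin b → ↥S))
        = x • (K.mkQ (v i • ((Pi.single i (1 : ↥S)) : Fin b → ↥S))) := by
      intro i
      rw [map_smul, mul_smul]
    simp_rw [h2]
    have h3 : (x • K.mkQ v) = ∑ i, x • K.mkQ (v i • ((Pi.single i (1 : ↥S)) : Fin b → ↥S)) := by
      rw [← Finset.smul_sum, ← map_sum, hsingle]
    rw [h3, map_sum, Finset.sum_apply]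
  refine ⟨m, V, ?_⟩
  ext v
  rw [LinearMap.mem_ker]
  constructor
  · intro hv
    have h0 : ∀ j, ∑ i, v i * V i j = 0 := by
      intro j
      have : rightMulMatrix V v j = 0 := by rw [hv]; rfl
      exact this
    have h1 : β.equivFun ((1 : ↥S) • K.mkQ v) = 0 := by
      funext j
      rw [← hkey v j 1, h0 j, map_zero]
      rfl
    rw [one_smul] at h1
    have h2 : K.mkQ v = 0 := by
      have := congrArg β.equivFun.symm h1
      rwa [β.equivFun.symm_apply_apply, map_zero] at this
    rwa [← Submodule.Quotient.mk_eq_zero]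
  · intro hv
    have hq : K.mkQ v = 0 := (Submodule.Quotient.mk_eq_zero K).mpr hv
    funext j
    show ∑ i, v i * V i j = 0
    have h1 : Φ (∑ i, v i * V i j) = Φ 0 := by
      rw [map_zero]
      apply LinearMap.ext
      intro x
      rw [hkey v j x, hq, smul_zero, map_zero]
      rfl
    exact Φ.injective h1

end Auxiliary

/-- Let `A` be a P-algebra over a field `k` that is flat as a right `A(n)`-module for every
`n` (equational criterion for flatness), and assume every finitely generated free `A`-module
is injective as an `A`-module (Margolis, Theorem 13.12).  Then every coherent `A`-module `M`
(i.e. `M ≅ A ⊗_{A(n)} M'` for some `n` and finitely generated graded `A(n)`-module `M'`)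
admits an injective resolution `0 → M → J^0 → J^1 → ⋯` in which every `J^s` is a finitely
generated free `A`-module. -/
theorem statement9 {k A : Type*} [Field k] [Ring A] [Algebra k A]
    (𝒜 : ℕ → Submodule k A) [GradedAlgebra 𝒜]
    (Fam : ℕ → Subalgebra k A) (pd : ℕ → ℕ)
    (hPA : IsPAlgebra k 𝒜 Fam pd)
    -- `A` is flat as a right `A(n)`-module for every `n`
    (hflat : ∀ (n m : ℕ) (x : Fin m → A), (∀ i, x i ∈ Fam n) → ∀ a : Fin m → A,
      ∑ i, a i * x i = 0 →
      ∃ (p : ℕ) (c : Fin p → A) (r : Fin p → Fin m → A),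
        (∀ j i, r j i ∈ Fam n) ∧ (∀ i, a i = ∑ j, c j * r j i) ∧
        (∀ j, ∑ i, r j i * x i = 0))
    -- every finitely generated free `A`-module is injective
    (hinj : ∀ m : ℕ, Module.Injective A (Fin m → A))
    -- `M` is a coherent `A`-module
    {M : Type*} [AddCommGroup M] [Module A M]
    (hM : ∃ n, IsInducedFrom 𝒜 (Fam n) M) :
    ∃ (r : ℕ → ℕ) (ε : M →ₗ[A] (Fin (r 0) → A))
      (δ : (s : ℕ) → ((Fin (r s) → A) →ₗ[A] (Fin (r (s + 1)) → A))),
      Function.Injective ε ∧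
      LinearMap.range ε = LinearMap.ker (δ 0) ∧
      ∀ s, LinearMap.range (δ s) = LinearMap.ker (δ (s + 1)) := by
  classical
  obtain ⟨n, p, q, T, dp, dq, hTmem, -, ⟨e⟩⟩ := hM
  set S : Subalgebra k A := Fam n with hS
  have hfd : FiniteDimensional k ↥S := hPA.finiteDimensional n
  obtain ⟨Φ, hΦ⟩ := frobenius_dual_equiv' 𝒜 S (pd n) (hPA.graded_subalgebra n) hfd
    (hPA.eq_bot_of_gt n) (hPA.top_rank n) (hPA.duality n)
  have key : ∀ (b : ℕ) (K : Submodule ↥S (Fin b → ↥S)),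
      ∃ (r : ℕ) (V : Fin b → Fin r → ↥S), LinearMap.ker (rightMulMatrix V) = K :=
    exists_copresentation' S hfd Φ hΦ
  have hsys := flat_sys' S (hflat n)
  -- the chain of copresentation matrices over S
  let X : Type _ := (ℕ × ℕ) × (ℕ → ℕ → ↥S)
  let toMat : (x : X) → (Fin x.1.1 → Fin x.1.2 → ↥S) := fun x i j => x.2 i j
  let Knext : (x : X) → Submodule ↥S (Fin x.1.2 → ↥S) :=
    fun x => LinearMap.range (rightMulMatrix (toMat x))
  let rd : X → ℕ := fun x => (key x.1.2 (Knext x)).choose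
  let Vn : (x : X) → (Fin x.1.2 → Fin (rd x) → ↥S) :=
    fun x => (key x.1.2 (Knext x)).choose_spec.choose
  have spec : ∀ x : X, LinearMap.ker (rightMulMatrix (Vn x)) = Knext x :=
    fun x => (key x.1.2 (Knext x)).choose_spec.choose_spec
  let stp : X → X := fun x => ((x.1.2, rd x),
    fun i j => if h : i < x.1.2 ∧ j < rd x then Vn x ⟨i, h.1⟩ ⟨j, h.2⟩ else 0)
  have hrestr : ∀ x : X, toMat (stp x) = Vn x := by
    intro x
    funext i j
    show (if h : (i : ℕ) < x.1.2 ∧ (j : ℕ) < rd x then Vn x ⟨i, h.1⟩ ⟨j, h.2⟩ else 0) = Vn x i j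
    rw [dif_pos ⟨i.2, j.2⟩]
  let T' : Fin p → Fin q → ↥S := fun i j => ⟨T i j, hTmem i j⟩
  let x₀ : X := ((p, q), fun i j => if h : i < p ∧ j < q then T' ⟨i, h.1⟩ ⟨j, h.2⟩ else 0)
  have hx₀ : toMat x₀ = T' := by
    funext i j
    show (if h : (i : ℕ) < p ∧ (j : ℕ) < q then T' ⟨i, h.1⟩ ⟨j, h.2⟩ else 0) = T' i j
    rw [dif_pos ⟨i.2, j.2⟩]
  let ch : ℕ → X := fun s => Nat.rec (motive := fun _ => X) (stp x₀) (fun _ ih => stp ih) s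
  -- exactness over S
  have hexS : ∀ s, LinearMap.ker (rightMulMatrix (toMat (ch (s + 1))))
      = LinearMap.range (rightMulMatrix (toMat (ch s))) := by
    intro s
    rw [show toMat (ch (s + 1)) = Vn (ch s) from hrestr (ch s)]
    exact spec (ch s)
  have hexS0 : LinearMap.ker (rightMulMatrix (toMat (ch 0)))
      = LinearMap.range (rightMulMatrix T') := by
    rw [show toMat (ch 0) = Vn x₀ from hrestr x₀]
    have h0 : LinearMap.ker (rightMulMatrix (Vn x₀)) = Knext x₀ := spec x₀
    have h0' : Knext x₀ = LinearMap.range (rightMulMatrix T') := by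
      show LinearMap.range (rightMulMatrix (toMat x₀)) = _
      rw [hx₀]
    exact h0.trans h0'
  -- exactness over A
  have hexA : ∀ s, LinearMap.ker (rightMulMatrix (fun i j => ((toMat (ch (s + 1))) i j : A)))
      = LinearMap.range (rightMulMatrix (fun i j => ((toMat (ch s)) i j : A))) :=
    fun s => ker_range_transfer' S hsys (toMat (ch s)) (toMat (ch (s + 1))) (hexS s)
  have hT'A : (fun i j => ((T' i j : A))) = T := rfl
  have hexA0 : LinearMap.ker (rightMulMatrix (fun i j => ((toMat (ch 0)) i j : A)))
      = LinearMap.range (rightMulMatrix T) := by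
    have := ker_range_transfer' S hsys T' (toMat (ch 0)) hexS0
    rwa [hT'A] at this
  -- the resolution
  let dA : (s : ℕ) → (Fin ((ch s).1.2) → A) →ₗ[A] (Fin ((ch (s + 1)).1.2) → A) :=
    fun s => rightMulMatrix (fun i j => ((toMat (ch (s + 1))) i j : A))
  have hle : LinearMap.range (rightMulMatrix T)
      ≤ LinearMap.ker (rightMulMatrix (fun i j => ((toMat (ch 0)) i j : A))) :=
    le_of_eq hexA0.symm
  let φ : ((Fin q → A) ⧸ LinearMap.range (rightMulMatrix T)) →ₗ[A] (Fin ((ch 0).1.2) → A) :=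
    Submodule.liftQ _ (rightMulMatrix (fun i j => ((toMat (ch 0)) i j : A))) hle
  let ε : M →ₗ[A] (Fin ((ch 0).1.2) → A) := φ ∘ₗ (e : M →ₗ[A] _)
  have hφinj : Function.Injective φ := by
    rw [← LinearMap.ker_eq_bot]
    exact Submodule.ker_liftQ_eq_bot _ _ _ (le_of_eq hexA0)
  have hεinj : Function.Injective ε := by
    intro m1 m2 h12
    exact e.injective (hφinj h12)
  have hεrange : LinearMap.range ε = LinearMap.ker (dA 0) := by
    have h1 : LinearMap.range ε = LinearMap.range φ := by
      show LinearMap.range (φ ∘ₗ (e : M →ₗ[A] _)) = _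
      rw [LinearMap.range_comp, LinearEquiv.range, Submodule.map_top]
    have h2 : LinearMap.range φ
        = LinearMap.range (rightMulMatrix (fun i j => ((toMat (ch 0)) i j : A))) :=
      Submodule.range_liftQ _ _ _
    rw [h1, h2]
    exact (hexA 0).symm
  exact ⟨fun s => (ch s).1.2, ε, dA, hεinj, hεrange, fun s => (hexA (s + 1)).symm⟩
end
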